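/- arXiv:0904.1078 — 7 statements merged into one kernel-verified Lean document; each statement's English description precedes it below -/
import Mathlib

section
/- Let p, q be positive integers, let α_1, …, α_p ≥ 0 and β_1, …, β_q ≥ 0 be real numbers, let γ ∈ ℝ, and set A(z) = Σ_{i=1}^p α_i z^i and B(z) = Σ_{i=1}^q β_i z^i. Then every complex root z of the polynomial 1 − (1+γ²)A(z) − B(z) satisfies |z| > 1 if and only if (1+γ²)A(1) + B(1) < 1. -/
/-- Stability criterion for the asymmetric GARCH(p,q) model:
every complex root `z` of `1 - (1+γ²)A(z) - B(z)`, with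
`A(z) = Σ_{i=1}^p α_i z^i` and `B(z) = Σ_{j=1}^q β_j z^j` (nonnegative coefficients),
satisfies `|z| > 1` if and only if `(1+γ²)A(1) + B(1) < 1`. -/
theorem stmt0 (p q : ℕ) (hp : 0 < p) (hq : 0 < q) (α β : ℕ → ℝ)
    (hα : ∀ i ∈ Finset.Icc 1 p, 0 ≤ α i)
    (hβ : ∀ j ∈ Finset.Icc 1 q, 0 ≤ β j) (γ : ℝ) :
    (∀ z : ℂ,
        1 - (1 + (γ : ℂ) ^ 2) * (∑ i ∈ Finset.Icc 1 p, (α i : ℂ) * z ^ i)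
          - (∑ j ∈ Finset.Icc 1 q, (β j : ℂ) * z ^ j) = 0 → 1 < ‖z‖)
      ↔ (1 + γ ^ 2) * (∑ i ∈ Finset.Icc 1 p, α i) + (∑ j ∈ Finset.Icc 1 q, β j) < 1 := by
  have hγ : (0:ℝ) ≤ 1 + γ ^ 2 := by positivity
  set F : ℝ → ℝ := fun t => (1 + γ ^ 2) * (∑ i ∈ Finset.Icc 1 p, α i * t ^ i)
      + (∑ j ∈ Finset.Icc 1 q, β j * t ^ j) with hF
  have zsum : ∀ (n : ℕ) (c : ℕ → ℝ), ∑ i ∈ Finset.Icc 1 n, c i * (0:ℝ) ^ i = 0 := by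
    intro n c
    apply Finset.sum_eq_zero
    intro i hi
    have hi' : i ≠ 0 := by simp only [Finset.mem_Icc] at hi; omega
    simp [zero_pow hi']
  constructor
  · intro h
    by_contra hle
    push_neg at hle
    have hF1 : 1 ≤ F 1 := by simpa [hF] using hle
    have hF0 : F 0 = 0 := by simp [hF, zsum]
    have hcont : ContinuousOn F (Set.Icc 0 1) := by
      apply Continuous.continuousOn
      simp only [hF]
      continuity
    have hmem : (1:ℝ) ∈ Set.Icc (F 0) (F 1) := by
      rw [hF0]; exact ⟨zero_le_one, hF1⟩
    obtain ⟨t, ht, htF⟩ := intermediate_value_Icc (by norm_num : (0:ℝ) ≤ 1) hcont hmem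
    have hroot : 1 - (1 + (γ:ℂ)^2) * (∑ i ∈ Finset.Icc 1 p, (α i : ℂ) * (t:ℂ) ^ i)
        - (∑ j ∈ Finset.Icc 1 q, (β j : ℂ) * (t:ℂ) ^ j) = 0 := by
      have : (↑(1 - F t) : ℂ) = 0 := by rw [htF]; simp
      simp only [hF] at this
      push_cast at this
      linear_combination this
    have := h _ hroot
    rw [Complex.norm_real, Real.norm_eq_abs, abs_of_nonneg ht.1] at this
    linarith [ht.2]
  · intro hlt z hz
    by_contra hle
    push_neg at hle
    have h1 : (1:ℂ) = (1 + (γ:ℂ)^2) * (∑ i ∈ Finset.Icc 1 p, (α i : ℂ) * z ^ i)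
        + (∑ j ∈ Finset.Icc 1 q, (β j : ℂ) * z ^ j) := by linear_combination hz
    have hA : ‖∑ i ∈ Finset.Icc 1 p, (α i : ℂ) * z ^ i‖
        ≤ ∑ i ∈ Finset.Icc 1 p, α i := by
      refine le_trans (norm_sum_le _ _) (Finset.sum_le_sum fun i hi => ?_)
      rw [norm_mul, Complex.norm_real, Real.norm_eq_abs, abs_of_nonneg (hα i hi), norm_pow]
      exact mul_le_of_le_one_right (hα i hi) (pow_le_one₀ (norm_nonneg z) hle)
    have hB : ‖∑ j ∈ Finset.Icc 1 q, (β j : ℂ) * z ^ j‖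
        ≤ ∑ j ∈ Finset.Icc 1 q, β j := by
      refine le_trans (norm_sum_le _ _) (Finset.sum_le_sum fun j hj => ?_)
      rw [norm_mul, Complex.norm_real, Real.norm_eq_abs, abs_of_nonneg (hβ j hj), norm_pow]
      exact mul_le_of_le_one_right (hβ j hj) (pow_le_one₀ (norm_nonneg z) hle)
    have hcoef : ‖(1 + (γ:ℂ)^2)‖ = 1 + γ ^ 2 := by
      rw [show (1 + (γ:ℂ)^2) = ((1 + γ^2 : ℝ) : ℂ) by push_cast; ring,
        Complex.norm_real, Real.norm_eq_abs, abs_of_nonneg hγ]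
    have key : (1:ℝ) ≤ (1 + γ ^ 2) * (∑ i ∈ Finset.Icc 1 p, α i)
        + (∑ j ∈ Finset.Icc 1 q, β j) := by
      have h2 : (1:ℝ) = ‖(1 + (γ:ℂ)^2) * (∑ i ∈ Finset.Icc 1 p, (α i : ℂ) * z ^ i)
          + (∑ j ∈ Finset.Icc 1 q, (β j : ℂ) * z ^ j)‖ := by rw [← h1]; simp
      refine h2.trans_le (le_trans (norm_add_le _ _) (add_le_add ?_ hB))
      rw [norm_mul, hcoef]
      exact mul_le_mul_of_nonneg_left hA hγ
    linarith
end

section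
/- Let (Ω, F, ℙ) be a probability space, let 𝒢 ⊆ F be a sub-σ-algebra, let σ be a nonnegative 𝒢-measurable random variable with E[σ⁴] < ∞ and E[σ²] > 0, and let ε be a standard normal random variable independent of 𝒢. Then E[σ⁴ε⁴] = 3 E[σ⁴], and the kurtosis of σε satisfies E[σ⁴ε⁴] / (E[σ²ε²])² = 3 + 3·Var(σ²)/(E[σ²])². In particular the excess kurtosis of σε is strictly positive whenever Var(σ²) > 0. -/
open MeasureTheory ProbabilityTheory Real

noncomputable def gexp (x : ℝ) : ℝ := Real.exp (-(2⁻¹ : ℝ) * x ^ 2)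

lemma integrable_pow_mul_gexp (n : ℕ) :
    Integrable (fun x : ℝ => x ^ n * gexp x) := by
  have h := integrable_rpow_mul_exp_neg_mul_sq (b := 2⁻¹) (by norm_num)
    (s := (n : ℝ)) (lt_of_lt_of_le (by norm_num) (Nat.cast_nonneg n))
  simpa [gexp, Real.rpow_natCast] using h

lemma hasDerivAt_negg (x : ℝ) :
    HasDerivAt (fun x : ℝ => -gexp x) (x * gexp x) x := by
  have h1 : HasDerivAt (fun x : ℝ => -(2⁻¹ : ℝ) * x ^ 2) (-x) x := by
    have := (hasDerivAt_pow 2 x).const_mul (-(2⁻¹ : ℝ))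
    refine this.congr_deriv ?_
    push_cast
    ring
  have := h1.exp.neg
  refine this.congr_deriv ?_
  simp only [gexp]
  ring

lemma integral_gexp : ∫ x : ℝ, gexp x = Real.sqrt (2 * π) := by
  rw [show (fun x : ℝ => gexp x) = fun x => Real.exp (-(2⁻¹:ℝ) * x ^ 2) from rfl,
    integral_gaussian, show π / (2⁻¹:ℝ) = 2 * π by ring]

lemma integral_sq_gexp : ∫ x : ℝ, x ^ 2 * gexp x = Real.sqrt (2 * π) := by
  have i1 : Integrable ((fun x : ℝ => x) * fun x : ℝ => x * gexp x) :=
    (integrable_pow_mul_gexp 2).congr (ae_of_all _ fun x => by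
      simp only [Pi.mul_apply, Pi.neg_apply]; ring)
  have i2 : Integrable ((fun _ : ℝ => (1:ℝ)) * fun x : ℝ => -gexp x) :=
    ((integrable_pow_mul_gexp 0).neg).congr (ae_of_all _ fun x => by
      simp only [Pi.mul_apply, Pi.neg_apply, pow_zero]; ring)
  have i3 : Integrable ((fun x : ℝ => x) * fun x : ℝ => -gexp x) :=
    ((integrable_pow_mul_gexp 1).neg).congr (ae_of_all _ fun x => by
      simp only [Pi.mul_apply, Pi.neg_apply, pow_one]; ring)
  have h := integral_mul_deriv_eq_deriv_mul_of_integrable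
    (u := fun x : ℝ => x) (u' := fun _ => (1 : ℝ))
    (v := fun x : ℝ => -gexp x) (v' := fun x : ℝ => x * gexp x)
    (fun x _ => hasDerivAt_id x) (fun x _ => hasDerivAt_negg x) i1 i2 i3
  calc ∫ x : ℝ, x ^ 2 * gexp x
      = ∫ x : ℝ, x * (x * gexp x) := by congr 1; ext x; ring
    _ = - ∫ x : ℝ, 1 * (-gexp x) := h
    _ = ∫ x : ℝ, gexp x := by rw [← integral_neg]; congr 1; ext x; ring
    _ = Real.sqrt (2 * π) := integral_gexp

lemma integral_pow4_gexp : ∫ x : ℝ, x ^ 4 * gexp x = 3 * Real.sqrt (2 * π) := by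
  have i1 : Integrable ((fun x : ℝ => x ^ 3) * fun x : ℝ => x * gexp x) :=
    (integrable_pow_mul_gexp 4).congr (ae_of_all _ fun x => by
      simp only [Pi.mul_apply, Pi.neg_apply]; ring)
  have i2 : Integrable ((fun x : ℝ => (3:ℝ) * x ^ 2) * fun x : ℝ => -gexp x) :=
    (((integrable_pow_mul_gexp 2).const_mul 3).neg).congr (ae_of_all _ fun x => by
      simp only [Pi.mul_apply, Pi.neg_apply]; ring)
  have i3 : Integrable ((fun x : ℝ => x ^ 3) * fun x : ℝ => -gexp x) :=
    ((integrable_pow_mul_gexp 3).neg).congr (ae_of_all _ fun x => by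
      simp only [Pi.mul_apply, Pi.neg_apply]; ring)
  have h := integral_mul_deriv_eq_deriv_mul_of_integrable
    (u := fun x : ℝ => x ^ 3) (u' := fun x : ℝ => (3 : ℝ) * x ^ 2)
    (v := fun x : ℝ => -gexp x) (v' := fun x : ℝ => x * gexp x)
    (fun x _ => by simpa using hasDerivAt_pow 3 x) (fun x _ => hasDerivAt_negg x) i1 i2 i3
  calc ∫ x : ℝ, x ^ 4 * gexp x
      = ∫ x : ℝ, x ^ 3 * (x * gexp x) := by congr 1; ext x; ring
    _ = - ∫ x : ℝ, (3 : ℝ) * x ^ 2 * (-gexp x) := h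
    _ = 3 * ∫ x : ℝ, x ^ 2 * gexp x := by
        rw [← integral_neg, ← integral_const_mul]; congr 1; ext x; ring
    _ = 3 * Real.sqrt (2 * π) := by rw [integral_sq_gexp]

lemma gaussianPDFReal_zero_one (x : ℝ) :
    gaussianPDFReal 0 1 x = (Real.sqrt (2 * π))⁻¹ * gexp x := by
  simp only [gaussianPDFReal, NNReal.coe_one, mul_one, sub_zero, gexp]
  congr 1
  ring

lemma gaussianPDF_zero_one_eq :
    gaussianPDF 0 1 = fun x => ((gaussianPDFReal 0 1 x).toNNReal : ENNReal) := rfl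

lemma sqrt_two_pi_pos : 0 < Real.sqrt (2 * π) :=
  Real.sqrt_pos.mpr (by positivity)

lemma integral_fun_gaussianReal (f : ℝ → ℝ) :
    ∫ x, f x ∂(gaussianReal 0 1) = (Real.sqrt (2 * π))⁻¹ * ∫ x, f x * gexp x := by
  rw [gaussianReal_of_var_ne_zero 0 one_ne_zero, gaussianPDF_zero_one_eq,
    integral_withDensity_eq_integral_smul ((measurable_gaussianPDFReal 0 1).real_toNNReal) f,
    ← integral_const_mul]
  congr 1
  ext x
  rw [NNReal.smul_def, Real.coe_toNNReal _ (gaussianPDFReal_nonneg _ _ _),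
    gaussianPDFReal_zero_one, smul_eq_mul]
  ring

lemma integrable_pow_gaussianReal (n : ℕ) :
    Integrable (fun x : ℝ => x ^ n) (gaussianReal 0 1) := by
  rw [gaussianReal_of_var_ne_zero 0 one_ne_zero, gaussianPDF_zero_one_eq,
    integrable_withDensity_iff_integrable_smul ((measurable_gaussianPDFReal 0 1).real_toNNReal)]
  apply ((integrable_pow_mul_gexp n).const_mul ((Real.sqrt (2 * π))⁻¹)).congr
  filter_upwards with x
  rw [NNReal.smul_def, Real.coe_toNNReal _ (gaussianPDFReal_nonneg _ _ _),
    gaussianPDFReal_zero_one, smul_eq_mul]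
  ring

/-- If `σ` is a nonnegative `𝒢`-measurable random variable with
`E[σ⁴] < ∞` and `E[σ²] > 0`, and `ε` is a standard normal random variable independent of
`𝒢`, then `E[σ⁴ε⁴] = 3E[σ⁴]`, the kurtosis of `σε` equals
`3 + 3·Var(σ²)/(E[σ²])²`, and the excess kurtosis is strictly positive whenever
`Var(σ²) > 0` (Gouriéroux's formula: heteroscedasticity implies leptokurtosis). -/
theorem stmt2 {Ω : Type*} (𝒢 : MeasurableSpace Ω) {m0 : MeasurableSpace Ω}
    (P : Measure Ω) [IsProbabilityMeasure P] (h𝒢 : 𝒢 ≤ m0)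
    (σ ε : Ω → ℝ) (hσ0 : ∀ ω, 0 ≤ σ ω)
    (hσmeas : Measurable[𝒢] σ) (hσ4 : Integrable (fun ω => σ ω ^ 4) P)
    (hσ2pos : 0 < ∫ ω, σ ω ^ 2 ∂P)
    (hεmeas : Measurable ε) (hεgauss : Measure.map ε P = gaussianReal 0 1)
    (hindep : Indep (MeasurableSpace.comap ε inferInstance) 𝒢 P) :
    (∫ ω, σ ω ^ 4 * ε ω ^ 4 ∂P = 3 * ∫ ω, σ ω ^ 4 ∂P)
    ∧ (∫ ω, (σ ω * ε ω) ^ 4 ∂P) / (∫ ω, (σ ω * ε ω) ^ 2 ∂P) ^ 2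
        = 3 + 3 * ((∫ ω, (σ ω ^ 2) ^ 2 ∂P - (∫ ω, σ ω ^ 2 ∂P) ^ 2)
            / (∫ ω, σ ω ^ 2 ∂P) ^ 2)
    ∧ (0 < ∫ ω, (σ ω ^ 2) ^ 2 ∂P - (∫ ω, σ ω ^ 2 ∂P) ^ 2 →
        3 < (∫ ω, (σ ω * ε ω) ^ 4 ∂P) / (∫ ω, (σ ω * ε ω) ^ 2 ∂P) ^ 2) := by
  have hσm : Measurable σ := hσmeas.mono h𝒢 le_rfl
  -- independence of σ and ε
  have hIF : IndepFun σ ε P := by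
    rw [IndepFun_iff_Indep]
    rw [Indep_iff] at hindep ⊢
    exact fun t1 t2 h1 h2 => by
      rw [Set.inter_comm, hindep t2 t1 h2 (hσmeas.comap_le t1 h1), mul_comm]
  have hIF4 : IndepFun (fun ω => σ ω ^ 4) (fun ω => ε ω ^ 4) P :=
    hIF.comp (measurable_id.pow_const 4) (measurable_id.pow_const 4)
  have hIF2 : IndepFun (fun ω => σ ω ^ 2) (fun ω => ε ω ^ 2) P :=
    hIF.comp (measurable_id.pow_const 2) (measurable_id.pow_const 2)
  -- integrability and moments of ε
  have hεint : ∀ n : ℕ, Integrable (fun ω => ε ω ^ n) P := by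
    intro n
    have h := integrable_pow_gaussianReal n
    rw [← hεgauss] at h
    exact (integrable_map_measure (g := fun x : ℝ => x ^ n)
      (Measurable.aestronglyMeasurable (by fun_prop)) hεmeas.aemeasurable).mp h
  have hεmom : ∀ n : ℕ, ∫ ω, ε ω ^ n ∂P = ∫ x : ℝ, x ^ n ∂(gaussianReal 0 1) := by
    intro n
    rw [← hεgauss, integral_map (f := fun x : ℝ => x ^ n) hεmeas.aemeasurable
      (Measurable.aestronglyMeasurable (by fun_prop))]
  have hε4mom : ∫ ω, ε ω ^ 4 ∂P = 3 := by
    rw [hεmom 4, integral_fun_gaussianReal, integral_pow4_gexp]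
    field_simp
  have hε2mom : ∫ ω, ε ω ^ 2 ∂P = 1 := by
    rw [hεmom 2, integral_fun_gaussianReal, integral_sq_gexp]
    field_simp
  -- integrability of σ²
  have hσ2int : Integrable (fun ω => σ ω ^ 2) P := by
    refine (hσ4.add (integrable_const 1)).mono'
      ((hσm.pow_const 2).aestronglyMeasurable) (ae_of_all _ fun ω => ?_)
    rw [Real.norm_eq_abs, abs_of_nonneg (by positivity)]
    simp only [Pi.add_apply]
    nlinarith [sq_nonneg (σ ω ^ 2 - 1)]
  -- product moments
  have key4 : ∫ ω, σ ω ^ 4 * ε ω ^ 4 ∂P = (∫ ω, σ ω ^ 4 ∂P) * ∫ ω, ε ω ^ 4 ∂P := by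
    have := IndepFun.integral_mul_eq_mul_integral hIF4 hσ4.aestronglyMeasurable (hεint 4).aestronglyMeasurable
    simpa [Pi.mul_apply] using this
  have key2 : ∫ ω, σ ω ^ 2 * ε ω ^ 2 ∂P = (∫ ω, σ ω ^ 2 ∂P) * ∫ ω, ε ω ^ 2 ∂P := by
    have := IndepFun.integral_mul_eq_mul_integral hIF2 hσ2int.aestronglyMeasurable (hεint 2).aestronglyMeasurable
    simpa [Pi.mul_apply] using this
  have part1 : ∫ ω, σ ω ^ 4 * ε ω ^ 4 ∂P = 3 * ∫ ω, σ ω ^ 4 ∂P := by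
    rw [key4, hε4mom]; ring
  have e4 : ∫ ω, (σ ω * ε ω) ^ 4 ∂P = 3 * ∫ ω, σ ω ^ 4 ∂P := by
    rw [← part1]; congr 1; ext ω; ring
  have e2 : ∫ ω, (σ ω * ε ω) ^ 2 ∂P = ∫ ω, σ ω ^ 2 ∂P := by
    have : ∫ ω, (σ ω * ε ω) ^ 2 ∂P = ∫ ω, σ ω ^ 2 * ε ω ^ 2 ∂P := by
      congr 1; ext ω; ring
    rw [this, key2, hε2mom, mul_one]
  have e44 : ∫ ω, (σ ω ^ 2) ^ 2 ∂P = ∫ ω, σ ω ^ 4 ∂P := by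
    congr 1; ext ω; ring
  have hA2 : (∫ ω, σ ω ^ 2 ∂P) ≠ 0 := ne_of_gt hσ2pos
  have part2 : (∫ ω, (σ ω * ε ω) ^ 4 ∂P) / (∫ ω, (σ ω * ε ω) ^ 2 ∂P) ^ 2
      = 3 + 3 * ((∫ ω, (σ ω ^ 2) ^ 2 ∂P - (∫ ω, σ ω ^ 2 ∂P) ^ 2)
          / (∫ ω, σ ω ^ 2 ∂P) ^ 2) := by
    rw [e4, e2, e44]
    field_simp
    ring
  refine ⟨part1, part2, fun hpos => ?_⟩
  rw [part2]
  have : 0 < 3 * ((∫ ω, (σ ω ^ 2) ^ 2 ∂P - (∫ ω, σ ω ^ 2 ∂P) ^ 2)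
      / (∫ ω, σ ω ^ 2 ∂P) ^ 2) := by
    apply mul_pos (by norm_num)
    exact div_pos hpos (pow_pos hσ2pos 2)
  linarith
end

section
/- Consider the GARCH log-price setup: (ε_n)_{n=1}^T i.i.d. standard normal on (Ω, F, ℙ), filtration F_n = σ(ε_1,…,ε_n), and predictable real processes (μ_n) and (σ_n) with σ_n > 0. Define Z_n := Π_{k=1}^n exp(−(μ_k/σ_k)ε_k − μ_k²/(2σ_k²)). If there are constants B ≥ 0 and ω > 0 such that |μ_k| ≤ B and σ_k² ≥ ω almost surely for all k, then E[Z_n²] ≤ exp(n B²/ω) < ∞ for every n ≤ T; in particular the density process (Z_n) is square-integrable. -/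
open MeasureTheory ProbabilityTheory

open Real
open scoped NNReal ENNReal

lemma gauss_mgf_lintegral (t : ℝ) :
    ∫⁻ y, ENNReal.ofReal (Real.exp (t * y)) ∂(gaussianReal 0 1) =
      ENNReal.ofReal (Real.exp (t ^ 2 / 2)) := by
  rw [gaussianReal_of_var_ne_zero 0 one_ne_zero,
    lintegral_withDensity_eq_lintegral_mul _ (measurable_gaussianPDF 0 1)
      (by fun_prop)]
  have hpt : ∀ y : ℝ, (gaussianPDF 0 1 * fun y => ENNReal.ofReal (Real.exp (t * y))) y
      = ENNReal.ofReal (Real.exp (t ^ 2 / 2)) * gaussianPDF t 1 y := by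
    intro y
    simp only [Pi.mul_apply, gaussianPDF, gaussianPDFReal]
    rw [← ENNReal.ofReal_mul (by positivity), ← ENNReal.ofReal_mul (by positivity)]
    congr 1
    have hexp : rexp (-(y - 0) ^ 2 / (2 * ((1:ℝ≥0):ℝ))) * rexp (t * y)
        = rexp (t ^ 2 / 2) * rexp (-(y - t) ^ 2 / (2 * ((1:ℝ≥0):ℝ))) := by
      rw [← Real.exp_add, ← Real.exp_add]
      congr 1
      push_cast
      ring
    linear_combination (√(2 * π * ((1:ℝ≥0):ℝ)))⁻¹ * hexp
  rw [show (gaussianPDF 0 1 * fun y => ENNReal.ofReal (Real.exp (t * y)))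
      = fun y => ENNReal.ofReal (Real.exp (t ^ 2 / 2)) * gaussianPDF t 1 y from funext hpt,
    lintegral_const_mul _ (measurable_gaussianPDF t 1),
    lintegral_gaussianPDF_eq_one t one_ne_zero, mul_one]

lemma key_step {Ω : Type*} {m0 : MeasurableSpace Ω} (P : Measure Ω) [IsProbabilityMeasure P]
    (X A Y : Ω → ℝ) (hX : Measurable X) (hA : Measurable A) (hY : Measurable Y)
    (hind : IndepFun (fun ω => (X ω, A ω)) Y P)
    (hYlaw : Measure.map Y P = gaussianReal 0 1) :
    ∫⁻ ω, ENNReal.ofReal (X ω ^ 2 * Real.exp (2 * A ω * Y ω - 2 * A ω ^ 2)) ∂P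
      = ∫⁻ ω, ENNReal.ofReal (X ω ^ 2) ∂P := by
  set W : Ω → ℝ × ℝ := fun ω => (X ω, A ω) with hW
  have hWm : Measurable W := hX.prodMk hA
  set g : (ℝ × ℝ) × ℝ → ℝ≥0∞ :=
    fun p => ENNReal.ofReal (p.1.1 ^ 2 * Real.exp (2 * p.1.2 * p.2 - 2 * p.1.2 ^ 2)) with hg
  have hgm : Measurable g := by fun_prop
  have hmap : Measure.map (fun ω => (W ω, Y ω)) P = (Measure.map W P).prod (Measure.map Y P) :=
    (indepFun_iff_map_prod_eq_prod_map_map hWm.aemeasurable hY.aemeasurable).mp hind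
  have h1 : ∫⁻ ω, ENNReal.ofReal (X ω ^ 2 * Real.exp (2 * A ω * Y ω - 2 * A ω ^ 2)) ∂P
      = ∫⁻ p, g p ∂(Measure.map (fun ω => (W ω, Y ω)) P) := by
    rw [lintegral_map hgm (hWm.prodMk hY)]
  rw [h1, hmap, hYlaw, MeasureTheory.lintegral_prod _ hgm.aemeasurable]
  have hinner : ∀ w : ℝ × ℝ, ∫⁻ y, g (w, y) ∂(gaussianReal 0 1)
      = ENNReal.ofReal (w.1 ^ 2) := by
    intro w
    have : ∀ y : ℝ, g (w, y)
        = ENNReal.ofReal (w.1 ^ 2 * Real.exp (-(2 * w.2 ^ 2)))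
            * ENNReal.ofReal (Real.exp (2 * w.2 * y)) := by
      intro y
      show ENNReal.ofReal (w.1 ^ 2 * Real.exp (2 * w.2 * y - 2 * w.2 ^ 2)) = _
      rw [← ENNReal.ofReal_mul (by positivity)]
      congr 1
      conv_rhs => rw [mul_assoc, ← Real.exp_add]
      congr 2
      ring
    simp_rw [this]
    rw [lintegral_const_mul _ (by fun_prop), gauss_mgf_lintegral (2 * w.2),
      ← ENNReal.ofReal_mul (by positivity)]
    congr 1
    rw [mul_assoc, ← Real.exp_add]
    ring_nf
    simp [Real.exp_zero]
  simp_rw [hinner]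
  rw [lintegral_map (by fun_prop) hWm]

/-- In the GARCH log-price setup, if `|μ_k| ≤ B` and `σ_k² ≥ ω₀ > 0`
almost surely for all `k`, then the density process
`Z_n = Π_{k=1}^n exp(-(μ_k/σ_k)ε_k - μ_k²/(2σ_k²))` satisfies
`E[Z_n²] ≤ exp(nB²/ω₀) < ∞` for every `n ≤ T`; in particular it is square-integrable. -/
theorem stmt6 {Ω : Type*} {m0 : MeasurableSpace Ω}
    (P : Measure Ω) [IsProbabilityMeasure P]
    (T : ℕ) (ε : ℕ → Ω → ℝ) (hεmeas : ∀ k, Measurable (ε k))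
    (hεindep : iIndepFun (fun i : Fin T => ε (i.val + 1)) P)
    (hεgauss : ∀ k, 1 ≤ k → k ≤ T → Measure.map (ε k) P = gaussianReal 0 1)
    (F : ℕ → MeasurableSpace Ω)
    (hF : ∀ n, F n = ⨆ k ∈ Finset.Icc 1 n, MeasurableSpace.comap (ε k) inferInstance)
    (μ σ : ℕ → Ω → ℝ)
    (hμpred : ∀ k, 1 ≤ k → Measurable[F (k - 1)] (μ k))
    (hσpred : ∀ k, 1 ≤ k → Measurable[F (k - 1)] (σ k))
    (hσpos : ∀ k ω, 0 < σ k ω)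
    (B ω₀ : ℝ) (hB : 0 ≤ B) (hω₀ : 0 < ω₀)
    (hbound : ∀ k, 1 ≤ k → k ≤ T → ∀ᵐ ω ∂P, |μ k ω| ≤ B ∧ ω₀ ≤ σ k ω ^ 2)
    (Z : ℕ → Ω → ℝ)
    (hZ : ∀ n ω, Z n ω = ∏ k ∈ Finset.Icc 1 n,
        Real.exp (-(μ k ω / σ k ω) * ε k ω - μ k ω ^ 2 / (2 * σ k ω ^ 2))) :
    ∀ n, n ≤ T →
      (∫ ω, Z n ω ^ 2 ∂P ≤ Real.exp (n * B ^ 2 / ω₀)) ∧ MemLp (Z n) 2 P := by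
  -- basic measurability facts
  have hFle : ∀ n, F n ≤ m0 := by
    intro n
    rw [hF n]
    exact iSup₂_le fun k _ => (hεmeas k).comap_le
  have hFmono : Monotone F := by
    intro a b hab
    rw [hF a, hF b]
    exact biSup_mono fun k hk => Finset.mem_Icc.mpr
      ⟨(Finset.mem_Icc.mp hk).1, le_trans (Finset.mem_Icc.mp hk).2 hab⟩
  have hεF : ∀ n k, 1 ≤ k → k ≤ n → Measurable[F n] (ε k) := by
    intro n k h1 h2
    refine Measurable.of_comap_le ?_
    rw [hF n]
    exact le_biSup (fun k : ℕ => MeasurableSpace.comap (ε k) (inferInstance : MeasurableSpace ℝ))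
      (Finset.mem_Icc.mpr ⟨h1, h2⟩)
  have hμF : ∀ n k, 1 ≤ k → k ≤ n + 1 → Measurable[F n] (μ k) :=
    fun n k h1 h2 => (hμpred k h1).mono (hFmono (by omega)) le_rfl
  have hσF : ∀ n k, 1 ≤ k → k ≤ n + 1 → Measurable[F n] (σ k) :=
    fun n k h1 h2 => (hσpred k h1).mono (hFmono (by omega)) le_rfl
  have hZF : ∀ n, Measurable[F n] (Z n) := by
    intro n
    have : Z n = fun ω => ∏ k ∈ Finset.Icc 1 n,
        Real.exp (-(μ k ω / σ k ω) * ε k ω - μ k ω ^ 2 / (2 * σ k ω ^ 2)) :=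
      funext fun ω => hZ n ω
    rw [this]
    refine Finset.measurable_prod _ fun k hk => ?_
    obtain ⟨h1, h2⟩ := Finset.mem_Icc.mp hk
    have hμ' := hμF n k h1 (by omega)
    have hσ' := hσF n k h1 (by omega)
    have hε' := hεF n k h1 h2
    exact (((hμ'.div hσ').neg.mul hε').sub
      (hμ'.pow_const 2 |>.div ((hσ'.pow_const 2).const_mul 2))).exp
  have hZm : ∀ n, Measurable (Z n) := fun n => (hZF n).mono (hFle n) le_rfl
  -- key lintegral bound by induction
  have main : ∀ n, n ≤ T →
      ∫⁻ ω, ENNReal.ofReal (Z n ω ^ 2) ∂P ≤ ENNReal.ofReal (Real.exp (n * B ^ 2 / ω₀)) := by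
    intro n
    induction n with
    | zero =>
      intro _
      have : ∀ ω, Z 0 ω = 1 := by intro ω; rw [hZ]; simp
      simp only [this]
      simp [ENNReal.ofReal_one]
    | succ n ih =>
      intro h
      have ihn := ih (by omega)
      set A : Ω → ℝ := fun ω => -(μ (n + 1) ω / σ (n + 1) ω) with hA
      have hAm : Measurable[F n] A := ((hμF n (n+1) (by omega) le_rfl).div
        (hσF n (n+1) (by omega) le_rfl)).neg
      -- independence
      have hindep : Indep (F n) (MeasurableSpace.comap (ε (n + 1)) inferInstance) P := by
        have hi : iIndep (fun i : Fin T =>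
            MeasurableSpace.comap (ε (i.val + 1)) inferInstance) P := hεindep
        set t : Set (Fin T) := {i | i.val + 1 ≤ n} with ht
        have hmain := indep_biSup_compl (fun i => (hεmeas _).comap_le) hi t
        refine indep_of_indep_of_le_right (indep_of_indep_of_le_left hmain ?_) ?_
        · rw [hF n]
          refine iSup₂_le fun k hk => ?_
          obtain ⟨h1, h2⟩ := Finset.mem_Icc.mp hk
          have hkT : k - 1 < T := by omega
          have hk1 : ((⟨k - 1, hkT⟩ : Fin T) : ℕ) + 1 = k := by
            show k - 1 + 1 = k
            omega
          have hmem : (⟨k - 1, hkT⟩ : Fin T) ∈ t := by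
            show k - 1 + 1 ≤ n
            omega
          have := le_biSup
            (fun i : Fin T => MeasurableSpace.comap (ε (i.val + 1)) inferInstance) hmem
          simp only [hk1] at this
          exact this
        · have hnT : n < T := by omega
          have hmem : (⟨n, hnT⟩ : Fin T) ∈ tᶜ := by
            show ¬(n + 1 ≤ n)
            omega
          exact le_biSup
            (fun i : Fin T => MeasurableSpace.comap (ε (i.val + 1)) inferInstance) hmem
      have hindF : IndepFun (fun ω => (Z n ω, A ω)) (ε (n + 1)) P := by
        have hWm : Measurable[F n] fun ω => (Z n ω, A ω) := (hZF n).prodMk hAm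
        exact indep_of_indep_of_le_left (indep_of_indep_of_le_right hindep le_rfl)
          hWm.comap_le
      have hkey := key_step P (Z n) A (ε (n + 1)) (hZm n)
        (hAm.mono (hFle n) le_rfl) (hεmeas (n + 1)) hindF (hεgauss (n + 1) (by omega) h)
      -- pointwise decomposition and a.e. bound
      have hsq : ∀ ω, Z (n + 1) ω ^ 2 =
          Z n ω ^ 2 * Real.exp (2 * A ω * ε (n + 1) ω - 2 * A ω ^ 2)
            * Real.exp (μ (n + 1) ω ^ 2 / σ (n + 1) ω ^ 2) := by
        intro ω
        have h1 : Z (n + 1) ω = Z n ω *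
            Real.exp (-(μ (n+1) ω / σ (n+1) ω) * ε (n+1) ω
              - μ (n+1) ω ^ 2 / (2 * σ (n+1) ω ^ 2)) := by
          rw [hZ (n+1) ω, hZ n ω, Finset.prod_Icc_succ_top (by omega)]
        rw [h1, mul_pow, sq (Real.exp _), ← Real.exp_add]
        conv_rhs => rw [mul_assoc, ← Real.exp_add]
        congr 2
        have hσne : σ (n+1) ω ≠ 0 := (hσpos (n+1) ω).ne'
        simp only [hA]
        field_simp
        ring
      have hae : ∀ᵐ ω ∂P, ENNReal.ofReal (Z (n + 1) ω ^ 2) ≤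
          ENNReal.ofReal (Real.exp (B ^ 2 / ω₀)) *
            ENNReal.ofReal (Z n ω ^ 2 * Real.exp (2 * A ω * ε (n + 1) ω - 2 * A ω ^ 2)) := by
        filter_upwards [hbound (n + 1) (by omega) h] with ω hω
        obtain ⟨hμB, hσω⟩ := hω
        rw [hsq ω, ← ENNReal.ofReal_mul (by positivity)]
        refine ENNReal.ofReal_le_ofReal ?_
        rw [mul_comm (Real.exp (B ^ 2 / ω₀))]
        refine mul_le_mul_of_nonneg_left (Real.exp_le_exp.mpr ?_) (by positivity)
        have h1 : μ (n+1) ω ^ 2 ≤ B ^ 2 := by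
          rw [← sq_abs]
          exact pow_le_pow_left₀ (abs_nonneg _) hμB 2
        exact div_le_div₀ (by positivity) h1 hω₀ hσω
      calc ∫⁻ ω, ENNReal.ofReal (Z (n + 1) ω ^ 2) ∂P
          ≤ ∫⁻ ω, ENNReal.ofReal (Real.exp (B ^ 2 / ω₀)) *
              ENNReal.ofReal (Z n ω ^ 2 * Real.exp (2 * A ω * ε (n + 1) ω - 2 * A ω ^ 2)) ∂P :=
            lintegral_mono_ae hae
        _ = ENNReal.ofReal (Real.exp (B ^ 2 / ω₀)) *
              ∫⁻ ω, ENNReal.ofReal (Z n ω ^ 2 *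
                Real.exp (2 * A ω * ε (n + 1) ω - 2 * A ω ^ 2)) ∂P := by
            refine lintegral_const_mul _ ?_
            have : Measurable A := hAm.mono (hFle n) le_rfl
            fun_prop
        _ = ENNReal.ofReal (Real.exp (B ^ 2 / ω₀)) * ∫⁻ ω, ENNReal.ofReal (Z n ω ^ 2) ∂P := by
            rw [hkey]
        _ ≤ ENNReal.ofReal (Real.exp (B ^ 2 / ω₀)) *
              ENNReal.ofReal (Real.exp (n * B ^ 2 / ω₀)) := by
            exact mul_le_mul_right ihn _
        _ = ENNReal.ofReal (Real.exp ((n + 1 : ℕ) * B ^ 2 / ω₀)) := by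
            rw [← ENNReal.ofReal_mul (by positivity), ← Real.exp_add]
            congr 2
            push_cast
            ring
  -- conclude
  intro n hn
  have hbound' := main n hn
  have hnonneg : 0 ≤ᵐ[P] fun ω => Z n ω ^ 2 := Filter.Eventually.of_forall fun ω => sq_nonneg _
  have hlt : ∫⁻ ω, ENNReal.ofReal (Z n ω ^ 2) ∂P < ⊤ :=
    lt_of_le_of_lt hbound' ENNReal.ofReal_lt_top
  have hint : Integrable (fun ω => Z n ω ^ 2) P := by
    refine ⟨((hZm n).pow_const 2).aestronglyMeasurable, ?_⟩
    rw [hasFiniteIntegral_iff_ofReal hnonneg]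
    exact hlt
  constructor
  · rw [integral_eq_lintegral_of_nonneg_ae hnonneg ((hZm n).pow_const 2).aestronglyMeasurable]
    calc (∫⁻ ω, ENNReal.ofReal (Z n ω ^ 2) ∂P).toReal
        ≤ (ENNReal.ofReal (Real.exp (n * B ^ 2 / ω₀))).toReal :=
          ENNReal.toReal_mono ENNReal.ofReal_ne_top hbound'
      _ = Real.exp (n * B ^ 2 / ω₀) := ENNReal.toReal_ofReal (Real.exp_nonneg _)
  · exact (memLp_two_iff_integrable_sq (hZm n).aestronglyMeasurable).mpr hint
end

section
/- Consider the GARCH log-price setup: (ε_n)_{n=1}^T i.i.d. standard normal on (Ω, F, ℙ), filtration F_n = σ(ε_1,…,ε_n), predictable real processes (μ_n) and (σ_n) with σ_n > 0, Z_T := Π_{k=1}^T exp(−(μ_k/σ_k)ε_k − μ_k²/(2σ_k²)), and Q the probability measure with density Z_T with respect to ℙ. Then the random variables ε̃_n := ε_n + μ_n/σ_n, n = 1, …, T, are mutually independent under Q and each ε̃_n has the standard normal distribution N(0,1) under Q. -/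
open MeasureTheory ProbabilityTheory Real
open scoped ENNReal NNReal

lemma gauss_cm (c : ℝ) {h : ℝ → ℝ≥0∞} (hh : Measurable h) :
    ∫⁻ x, h (x + c) * ENNReal.ofReal (Real.exp (-c * x - c ^ 2 / 2)) ∂(gaussianReal 0 1)
      = ∫⁻ x, h x ∂(gaussianReal 0 1) := by
  have hme : Measurable fun x : ℝ => h (x + c) * ENNReal.ofReal (Real.exp (-c * x - c ^ 2 / 2)) :=
    (hh.comp (measurable_add_const c)).mul
      (ENNReal.measurable_ofReal.comp (Real.measurable_exp.comp (by fun_prop)))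
  rw [gaussianReal_of_var_ne_zero 0 one_ne_zero,
    lintegral_withDensity_eq_lintegral_mul _ (measurable_gaussianPDF 0 1) hme,
    lintegral_withDensity_eq_lintegral_mul _ (measurable_gaussianPDF 0 1) hh]
  have key : ∀ x : ℝ, gaussianPDF 0 1 x * ENNReal.ofReal (Real.exp (-c * x - c ^ 2 / 2))
      = gaussianPDF 0 1 (x + c) := by
    intro x
    rw [gaussianPDF, gaussianPDF, ← ENNReal.ofReal_mul (gaussianPDFReal_nonneg 0 1 x)]
    congr 1
    simp only [gaussianPDFReal, NNReal.coe_one, mul_one, sub_zero]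
    rw [mul_assoc, ← Real.exp_add]
    congr 1
    ring
  calc ∫⁻ x, (gaussianPDF 0 1 * fun x => h (x + c)
          * ENNReal.ofReal (Real.exp (-c * x - c ^ 2 / 2))) x
      = ∫⁻ x, (fun y => gaussianPDF 0 1 y * h y) (x + c) := by
        congr 1; funext x
        simp only [Pi.mul_apply]
        rw [← mul_assoc, mul_comm (gaussianPDF 0 1 x) (h (x+c)), mul_assoc, key x, mul_comm]
    _ = ∫⁻ y, (fun y => gaussianPDF 0 1 y * h y) y := by
        conv_rhs => rw [← map_add_right_eq_self volume c]
        rw [lintegral_map (f := fun y => gaussianPDF 0 1 y * h y) ((measurable_gaussianPDF 0 1).mul hh) (measurable_add_const c)]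
    _ = ∫⁻ y, (gaussianPDF 0 1 * h) y := rfl

lemma meas_snoc {n : ℕ} :
    Measurable (fun p : (Fin n → ℝ) × ℝ => (Fin.snoc p.1 p.2 : Fin (n+1) → ℝ)) := by
  apply measurable_pi_lambda
  intro i
  induction i using Fin.lastCases with
  | last => simpa [Fin.snoc_last] using measurable_snd
  | cast j => simpa [Fin.snoc_castSucc] using (show Measurable fun c : (Fin n → ℝ) × ℝ => c.1 j from (measurable_pi_apply j).comp measurable_fst)

lemma pi_succ_lintegral {n : ℕ} (f : (Fin (n+1) → ℝ) → ℝ≥0∞) (hf : Measurable f) :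
    ∫⁻ x, f x ∂(Measure.pi fun _ : Fin (n+1) => gaussianReal 0 1)
      = ∫⁻ v, ∫⁻ y, f (Fin.snoc v y) ∂(gaussianReal 0 1)
          ∂(Measure.pi fun _ : Fin n => gaussianReal 0 1) := by
  have e := measurePreserving_piFinSuccAbove (fun _ : Fin (n+1) => gaussianReal 0 1) (Fin.last n)
  rw [← (e.symm (MeasurableEquiv.piFinSuccAbove (fun _ : Fin (n+1) => ℝ) (Fin.last n))).map_eq,
    lintegral_map hf (MeasurableEquiv.measurable _)]
  rw [show (fun a : ℝ × (Fin n → ℝ) =>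
        f ((MeasurableEquiv.piFinSuccAbove (fun _ : Fin (n+1) => ℝ) (Fin.last n)).symm a))
      = f ∘ ((MeasurableEquiv.piFinSuccAbove (fun _ : Fin (n+1) => ℝ) (Fin.last n)).symm) from rfl,
    lintegral_prod_symm' _ (hf.comp (MeasurableEquiv.measurable _))]
  congr 1
  funext v
  congr 1
  funext y
  show f ((MeasurableEquiv.piFinSuccAbove (fun _ : Fin (n+1) => ℝ) (Fin.last n)).symm (y, v)) = _
  congr 1
  simp [MeasurableEquiv.piFinSuccAbove, Fin.insertNth_last', Fin.snocEquiv]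

lemma map_eval_pi_gauss {n : ℕ} (i : Fin n) :
    Measure.map (fun x : Fin n → ℝ => x i) (Measure.pi fun _ : Fin n => gaussianReal 0 1)
      = gaussianReal 0 1 := by
  ext s hs
  rw [Measure.map_apply (measurable_pi_apply i) hs]
  have : (fun x : Fin n → ℝ => x i) ⁻¹' s
      = Set.pi Set.univ (Function.update (fun _ => Set.univ) i s) := by
    rw [← Set.eval_preimage]
  rw [this, Measure.pi_pi]
  rw [Fintype.prod_eq_single i]
  · simp
  · intro j hj
    simp [Function.update_of_ne hj]

lemma indep_mono {Ω : Type*} {m0 : MeasurableSpace Ω} {P : Measure Ω}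
    {m1 m2 m1' m2' : MeasurableSpace Ω}
    (h : Indep m1 m2 P) (h1 : m1' ≤ m1) (h2 : m2' ≤ m2) : Indep m1' m2' P := by
  rw [Indep_iff] at h ⊢
  exact fun t1 t2 ht1 ht2 => h t1 t2 (h1 _ ht1) (h2 _ ht2)

lemma step_lemma {Ω : Type*} {m0 : MeasurableSpace Ω} (P : Measure Ω) [IsProbabilityMeasure P]
    {n : ℕ} (E : Ω → Fin n → ℝ) (c : Ω → ℝ) (z : Ω → ℝ≥0∞) (X : Ω → ℝ)
    (hE : Measurable E) (hc : Measurable c) (hz : Measurable z) (hX : Measurable X)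
    (hindep : IndepFun (fun ω => ((E ω, c ω), z ω)) X P)
    (hXgauss : Measure.map X P = gaussianReal 0 1)
    (f : (Fin (n+1) → ℝ) → ℝ≥0∞) (hf : Measurable f) :
    ∫⁻ ω, z ω * (ENNReal.ofReal (Real.exp (-c ω * X ω - c ω ^ 2 / 2))
        * f (Fin.snoc (E ω) (X ω + c ω))) ∂P
      = ∫⁻ ω, z ω * (∫⁻ y, f (Fin.snoc (E ω) y) ∂(gaussianReal 0 1)) ∂P := by
  have hW : Measurable (fun ω => ((E ω, c ω), z ω)) := (hE.prodMk hc).prodMk hz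
  have hΦm : Measurable (fun p : (((Fin n → ℝ) × ℝ) × ℝ≥0∞) × ℝ =>
      p.1.2 * (ENNReal.ofReal (Real.exp (-p.1.1.2 * p.2 - p.1.1.2 ^ 2 / 2))
        * f (Fin.snoc p.1.1.1 (p.2 + p.1.1.2)))) := by
    apply Measurable.mul (measurable_snd.comp measurable_fst)
    apply Measurable.mul
    · exact ENNReal.measurable_ofReal.comp (Real.measurable_exp.comp (by fun_prop))
    · exact hf.comp (meas_snoc.comp
        ((measurable_fst.comp (measurable_fst.comp measurable_fst)).prodMk
          (measurable_snd.add
            (measurable_snd.comp (measurable_fst.comp measurable_fst)))))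
  have hpair := (indepFun_iff_map_prod_eq_prod_map_map hW.aemeasurable hX.aemeasurable).mp hindep
  rw [hXgauss] at hpair
  have hΨm : Measurable (fun w : ((Fin n → ℝ) × ℝ) × ℝ≥0∞ =>
      w.2 * ∫⁻ y, f (Fin.snoc w.1.1 y) ∂(gaussianReal 0 1)) := by
    apply Measurable.mul measurable_snd
    have hq : Measurable (fun q : (((Fin n → ℝ) × ℝ) × ℝ≥0∞) × ℝ => f (Fin.snoc q.1.1.1 q.2)) :=
      hf.comp (meas_snoc.comp
        ((measurable_fst.comp (measurable_fst.comp measurable_fst)).prodMk measurable_snd))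
    exact hq.lintegral_prod_right'
  calc ∫⁻ ω, z ω * (ENNReal.ofReal (Real.exp (-c ω * X ω - c ω ^ 2 / 2))
          * f (Fin.snoc (E ω) (X ω + c ω))) ∂P
      = ∫⁻ p, (fun p : (((Fin n → ℝ) × ℝ) × ℝ≥0∞) × ℝ =>
            p.1.2 * (ENNReal.ofReal (Real.exp (-p.1.1.2 * p.2 - p.1.1.2 ^ 2 / 2))
              * f (Fin.snoc p.1.1.1 (p.2 + p.1.1.2)))) p
          ∂(Measure.map (fun ω => (((E ω, c ω), z ω), X ω)) P) :=
        (lintegral_map hΦm (hW.prodMk hX)).symm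
    _ = ∫⁻ w, ∫⁻ x, w.2 * (ENNReal.ofReal (Real.exp (-w.1.2 * x - w.1.2 ^ 2 / 2))
            * f (Fin.snoc w.1.1 (x + w.1.2))) ∂(gaussianReal 0 1)
          ∂(Measure.map (fun ω => ((E ω, c ω), z ω)) P) := by
        rw [hpair]; exact lintegral_prod _ hΦm.aemeasurable
    _ = ∫⁻ w, (fun w : ((Fin n → ℝ) × ℝ) × ℝ≥0∞ =>
            w.2 * ∫⁻ y, f (Fin.snoc w.1.1 y) ∂(gaussianReal 0 1)) w
          ∂(Measure.map (fun ω => ((E ω, c ω), z ω)) P) := by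
        refine lintegral_congr fun w => ?_
        have hin : Measurable (fun x : ℝ =>
            ENNReal.ofReal (Real.exp (-w.1.2 * x - w.1.2 ^ 2 / 2))
              * f (Fin.snoc w.1.1 (x + w.1.2))) :=
          (ENNReal.measurable_ofReal.comp (Real.measurable_exp.comp (by fun_prop))).mul
            (hf.comp (meas_snoc.comp (measurable_const.prodMk (measurable_add_const _))))
        rw [lintegral_const_mul _ hin]
        congr 1
        rw [← gauss_cm w.1.2 (h := fun y => f (Fin.snoc w.1.1 y))
          (hf.comp (meas_snoc.comp (measurable_const.prodMk measurable_id)))]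
        exact lintegral_congr fun x => mul_comm _ _
    _ = ∫⁻ ω, z ω * (∫⁻ y, f (Fin.snoc (E ω) y) ∂(gaussianReal 0 1)) ∂P :=
        lintegral_map hΨm hW


/-- (Girsanov for GARCH with Gaussian innovations.) In the GARCH
log-price setup, under the measure `Q` with density
`Z_T = Π_{k=1}^T exp(-(μ_k/σ_k)ε_k - μ_k²/(2σ_k²))` with respect to `P`, the
risk-neutralized innovations `ε̃_n = ε_n + μ_n/σ_n`, `n = 1,…,T`, are mutually
independent and each is standard normal `N(0,1)` under `Q`. -/
theorem stmt8 {Ω : Type*} {m0 : MeasurableSpace Ω}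
    (P : Measure Ω) [IsProbabilityMeasure P]
    (T : ℕ) (ε : ℕ → Ω → ℝ) (hεmeas : ∀ k, Measurable (ε k))
    (hεindep : iIndepFun (fun i : Fin T => ε (i.val + 1)) P)
    (hεgauss : ∀ k, 1 ≤ k → k ≤ T → Measure.map (ε k) P = gaussianReal 0 1)
    (F : ℕ → MeasurableSpace Ω)
    (hF : ∀ n, F n = ⨆ k ∈ Finset.Icc 1 n, MeasurableSpace.comap (ε k) inferInstance)
    (μ σ : ℕ → Ω → ℝ)
    (hμpred : ∀ k, 1 ≤ k → Measurable[F (k - 1)] (μ k))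
    (hσpred : ∀ k, 1 ≤ k → Measurable[F (k - 1)] (σ k))
    (hσpos : ∀ k ω, 0 < σ k ω)
    (Z : Ω → ℝ)
    (hZ : ∀ ω, Z ω = ∏ k ∈ Finset.Icc 1 T,
        Real.exp (-(μ k ω / σ k ω) * ε k ω - μ k ω ^ 2 / (2 * σ k ω ^ 2)))
    (Q : Measure Ω) (hQ : Q = P.withDensity fun ω => ENNReal.ofReal (Z ω)) :
    iIndepFun
      (fun i : Fin T => fun ω => ε (i.val + 1) ω + μ (i.val + 1) ω / σ (i.val + 1) ω) Q
    ∧ ∀ k, 1 ≤ k → k ≤ T →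
        Measure.map (fun ω => ε k ω + μ k ω / σ k ω) Q = gaussianReal 0 1 := by
  -- basic measurability facts
  have hFle : ∀ n, F n ≤ m0 := by
    intro n; rw [hF]
    exact iSup₂_le fun k _ => (hεmeas k).comap_le
  have hFmono : ∀ {a b : ℕ}, a ≤ b → F a ≤ F b := by
    intro a b hab
    rw [hF, hF]
    refine iSup₂_le fun k hk => ?_
    simp only [Finset.mem_Icc] at hk
    exact le_iSup₂ (f := fun k (_ : k ∈ Finset.Icc 1 b) =>
      MeasurableSpace.comap (ε k) inferInstance) k (Finset.mem_Icc.mpr ⟨hk.1, hk.2.trans hab⟩)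
  have hεF : ∀ k n, 1 ≤ k → k ≤ n → Measurable[F n] (ε k) := by
    intro k n h1 h2
    have h3 : MeasurableSpace.comap (ε k) inferInstance ≤ F n := by
      rw [hF]
      exact le_iSup₂ (f := fun k (_ : k ∈ Finset.Icc 1 n) =>
        MeasurableSpace.comap (ε k) inferInstance) k (Finset.mem_Icc.mpr ⟨h1, h2⟩)
    exact (measurable_iff_comap_le.mpr le_rfl).mono h3 le_rfl
  have hμF : ∀ k n, 1 ≤ k → k ≤ n → Measurable[F n] (μ k) :=
    fun k n h1 h2 => (hμpred k h1).mono (hFmono (by omega)) le_rfl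
  have hσF : ∀ k n, 1 ≤ k → k ≤ n → Measurable[F n] (σ k) :=
    fun k n h1 h2 => (hσpred k h1).mono (hFmono (by omega)) le_rfl
  have hLF : ∀ k n, 1 ≤ k → k ≤ n → Measurable[F n] (fun ω => μ k ω / σ k ω) :=
    fun k n h1 h2 => (hμF k n h1 h2).div (hσF k n h1 h2)
  have htildemeas : ∀ k, 1 ≤ k → Measurable (fun ω => ε k ω + μ k ω / σ k ω) := by
    intro k hk
    exact (hεmeas k).add
      ((((hμpred k hk).mono (hFle _) le_rfl)).div (((hσpred k hk).mono (hFle _) le_rfl)))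
  -- independence of F n and ε (n+1)
  have hstep : ∀ n, n + 1 ≤ T →
      Indep (F n) (MeasurableSpace.comap (ε (n+1)) inferInstance) P := by
    intro n hn
    have hi : iIndep (fun i : Fin T =>
        MeasurableSpace.comap (ε (i.val+1)) inferInstance) P := hεindep.iIndep
    have hle : ∀ i : Fin T, MeasurableSpace.comap (ε (i.val+1)) inferInstance ≤ m0 :=
      fun i => (hεmeas _).comap_le
    have hnT : n < T := hn
    have h2 := indep_iSup_of_disjoint hle hi
      (S := {i : Fin T | i.val < n}) (T := {(⟨n, hnT⟩ : Fin T)})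
      (by
        rw [Set.disjoint_left]
        rintro i hi1 hi2
        simp only [Set.mem_setOf_eq] at hi1
        simp only [Set.mem_singleton_iff] at hi2
        subst hi2
        simp at hi1)
    refine indep_mono h2 ?_ ?_
    · rw [hF]
      refine iSup₂_le fun k hk => ?_
      simp only [Finset.mem_Icc] at hk
      have hk1 : k - 1 < T := by omega
      have hek : ε k = ε ((⟨k-1, hk1⟩ : Fin T).val + 1) :=
        congrArg ε (by omega : k = k - 1 + 1)
      rw [hek]
      exact le_iSup₂ (f := fun (i : Fin T) (_ : i ∈ {i : Fin T | i.val < n}) =>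
        MeasurableSpace.comap (ε (i.val+1)) inferInstance) (⟨k-1, hk1⟩ : Fin T)
        (by simp only [Set.mem_setOf_eq]; omega)
    · exact le_iSup₂ (f := fun (i : Fin T) (_ : i ∈ ({(⟨n, hnT⟩ : Fin T)} : Set (Fin T))) =>
        MeasurableSpace.comap (ε (i.val+1)) inferInstance) (⟨n, hnT⟩ : Fin T) rfl
  -- the key identity
  have key : ∀ n, n ≤ T → ∀ f : (Fin n → ℝ) → ℝ≥0∞, Measurable f →
      ∫⁻ ω, (∏ k ∈ Finset.Icc 1 n, ENNReal.ofReal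
            (Real.exp (-(μ k ω / σ k ω) * ε k ω - (μ k ω / σ k ω) ^ 2 / 2)))
          * f (fun i : Fin n => ε (i.val + 1) ω + μ (i.val + 1) ω / σ (i.val + 1) ω) ∂P
        = ∫⁻ x, f x ∂(Measure.pi fun _ : Fin n => gaussianReal 0 1) := by
    intro n
    induction n with
    | zero =>
      intro _ f hf
      have h0 : Finset.Icc 1 0 = ∅ := by simp
      have hconst : ∀ x : Fin 0 → ℝ, f x = f (fun i => i.elim0) :=
        fun x => congrArg f (funext fun i => i.elim0)
      simp only [h0, Finset.prod_empty, one_mul]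
      rw [lintegral_congr (fun ω => hconst _), lintegral_congr (fun x => hconst x)]
      simp
    | succ n ih =>
      intro hn1 f hf
      have hn : n ≤ T := by omega
      -- measurable pieces
      have hEF : Measurable[F n] (fun ω =>
          (fun i : Fin n => ε (i.val+1) ω + μ (i.val+1) ω / σ (i.val+1) ω)) := by
        refine @measurable_pi_iff Ω (Fin n) (fun _ => ℝ) (F n) _ _ |>.mpr fun i => ?_
        exact (hεF (i.val+1) n (by omega) (by omega)).add
          (hLF (i.val+1) n (by omega) (by omega))
      have hcF : Measurable[F n] (fun ω => μ (n+1) ω / σ (n+1) ω) := by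
        have h1 := hμpred (n+1) (by omega)
        have h2 := hσpred (n+1) (by omega)
        rw [Nat.add_sub_cancel] at h1 h2
        exact h1.div h2
      have hzF : Measurable[F n] (fun ω => ∏ k ∈ Finset.Icc 1 n, ENNReal.ofReal
          (Real.exp (-(μ k ω / σ k ω) * ε k ω - (μ k ω / σ k ω) ^ 2 / 2))) := by
        apply Finset.measurable_prod
        intro k hk
        simp only [Finset.mem_Icc] at hk
        have hL := hLF k n hk.1 hk.2
        exact ENNReal.measurable_ofReal.comp (Real.measurable_exp.comp
          ((hL.neg.mul (hεF k n hk.1 hk.2)).sub ((hL.pow_const 2).div_const 2)))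
      have hEm : Measurable (fun ω =>
          (fun i : Fin n => ε (i.val+1) ω + μ (i.val+1) ω / σ (i.val+1) ω)) :=
        hEF.mono (hFle n) le_rfl
      have hcm : Measurable (fun ω => μ (n+1) ω / σ (n+1) ω) := hcF.mono (hFle n) le_rfl
      have hzm : Measurable (fun ω => ∏ k ∈ Finset.Icc 1 n, ENNReal.ofReal
          (Real.exp (-(μ k ω / σ k ω) * ε k ω - (μ k ω / σ k ω) ^ 2 / 2))) :=
        hzF.mono (hFle n) le_rfl
      have hWF : Measurable[F n] (fun ω =>
          (((fun i : Fin n => ε (i.val+1) ω + μ (i.val+1) ω / σ (i.val+1) ω),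
            μ (n+1) ω / σ (n+1) ω),
           ∏ k ∈ Finset.Icc 1 n, ENNReal.ofReal
            (Real.exp (-(μ k ω / σ k ω) * ε k ω - (μ k ω / σ k ω) ^ 2 / 2)))) :=
        (hEF.prodMk hcF).prodMk hzF
      have hindepWε : IndepFun (fun ω =>
          (((fun i : Fin n => ε (i.val+1) ω + μ (i.val+1) ω / σ (i.val+1) ω),
            μ (n+1) ω / σ (n+1) ω),
           ∏ k ∈ Finset.Icc 1 n, ENNReal.ofReal
            (Real.exp (-(μ k ω / σ k ω) * ε k ω - (μ k ω / σ k ω) ^ 2 / 2))))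
          (ε (n+1)) P := by
        rw [IndepFun_iff_Indep]
        exact indep_mono (hstep n hn1) (measurable_iff_comap_le.mp hWF) le_rfl
      -- rewrite integrand
      have hsplit : ∀ ω,
          (∏ k ∈ Finset.Icc 1 (n+1), ENNReal.ofReal
            (Real.exp (-(μ k ω / σ k ω) * ε k ω - (μ k ω / σ k ω) ^ 2 / 2)))
          * f (fun i : Fin (n+1) => ε (i.val + 1) ω + μ (i.val + 1) ω / σ (i.val + 1) ω)
          = (∏ k ∈ Finset.Icc 1 n, ENNReal.ofReal
            (Real.exp (-(μ k ω / σ k ω) * ε k ω - (μ k ω / σ k ω) ^ 2 / 2)))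
            * (ENNReal.ofReal (Real.exp (-(μ (n+1) ω / σ (n+1) ω) * ε (n+1) ω
                - (μ (n+1) ω / σ (n+1) ω) ^ 2 / 2))
              * f (Fin.snoc
                  (fun i : Fin n => ε (i.val+1) ω + μ (i.val+1) ω / σ (i.val+1) ω)
                  (ε (n+1) ω + μ (n+1) ω / σ (n+1) ω))) := by
        intro ω
        rw [Finset.prod_Icc_succ_top (by omega)]
        have hv : (fun i : Fin (n+1) => ε (i.val+1) ω + μ (i.val+1) ω / σ (i.val+1) ω)
            = Fin.snoc (fun i : Fin n => ε (i.val+1) ω + μ (i.val+1) ω / σ (i.val+1) ω)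
                (ε (n+1) ω + μ (n+1) ω / σ (n+1) ω) := by
          funext i
          induction i using Fin.lastCases with
          | last => simp [Fin.snoc_last]
          | cast j => simp [Fin.snoc_castSucc]
        rw [hv, mul_assoc]
      rw [lintegral_congr hsplit]
      rw [step_lemma P _ _ _ _ hEm hcm hzm (hεmeas (n+1)) hindepWε
        (hεgauss (n+1) (by omega) hn1) f hf]
      have hg : Measurable (fun v : Fin n → ℝ =>
          ∫⁻ y, f (Fin.snoc v y) ∂(gaussianReal 0 1)) :=
        Measurable.lintegral_prod_right'
          (f := fun p : (Fin n → ℝ) × ℝ => f (Fin.snoc p.1 p.2)) (hf.comp meas_snoc)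
      rw [pi_succ_lintegral f hf]
      exact ih hn _ hg
  -- translating the density
  have hexp_eq : ∀ k ω, -(μ k ω / σ k ω) * ε k ω - μ k ω ^ 2 / (2 * σ k ω ^ 2)
      = -(μ k ω / σ k ω) * ε k ω - (μ k ω / σ k ω) ^ 2 / 2 := by
    intro k ω
    rw [div_pow, div_div, mul_comm (σ k ω ^ 2) 2]
  have hofZ : ∀ ω, ENNReal.ofReal (Z ω) = ∏ k ∈ Finset.Icc 1 T, ENNReal.ofReal
      (Real.exp (-(μ k ω / σ k ω) * ε k ω - (μ k ω / σ k ω) ^ 2 / 2)) := by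
    intro ω
    rw [hZ ω, ENNReal.ofReal_prod_of_nonneg (fun k _ => (Real.exp_pos _).le)]
    exact Finset.prod_congr rfl fun k _ => by rw [hexp_eq]
  have hvecmeas : Measurable (fun ω =>
      (fun i : Fin T => ε (i.val+1) ω + μ (i.val+1) ω / σ (i.val+1) ω)) := by
    apply measurable_pi_lambda
    intro i
    exact htildemeas (i.val+1) (by omega)
  -- the pushforward of Q under the vector of innovations is the Gaussian product
  have hmapQ : Measure.map (fun ω =>
        (fun i : Fin T => ε (i.val+1) ω + μ (i.val+1) ω / σ (i.val+1) ω)) Q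
      = Measure.pi (fun _ : Fin T => gaussianReal 0 1) := by
    refine Measure.ext fun s hs => ?_
    rw [Measure.map_apply hvecmeas hs, hQ, withDensity_apply _ (hvecmeas hs),
      ← lintegral_indicator (hvecmeas hs) (fun ω => ENNReal.ofReal (Z ω))]
    have hind : ∀ ω, ((fun ω =>
          (fun i : Fin T => ε (i.val+1) ω + μ (i.val+1) ω / σ (i.val+1) ω)) ⁻¹' s).indicator
          (fun ω => ENNReal.ofReal (Z ω)) ω
        = (∏ k ∈ Finset.Icc 1 T, ENNReal.ofReal
            (Real.exp (-(μ k ω / σ k ω) * ε k ω - (μ k ω / σ k ω) ^ 2 / 2)))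
          * s.indicator (fun _ => (1 : ℝ≥0∞))
            (fun i : Fin T => ε (i.val+1) ω + μ (i.val+1) ω / σ (i.val+1) ω) := by
      intro ω
      by_cases hω : (fun i : Fin T => ε (i.val+1) ω + μ (i.val+1) ω / σ (i.val+1) ω) ∈ s
      · rw [Set.indicator_of_mem (by exact hω), Set.indicator_of_mem hω, hofZ ω, mul_one]
      · rw [Set.indicator_of_notMem (by exact hω), Set.indicator_of_notMem hω, mul_zero]
    rw [lintegral_congr hind, key T le_rfl _ (measurable_const.indicator hs)]
    exact lintegral_indicator_one hs
  have hQprob : IsProbabilityMeasure Q := by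
    constructor
    have h1 : Q Set.univ = (Measure.map (fun ω =>
        (fun i : Fin T => ε (i.val+1) ω + μ (i.val+1) ω / σ (i.val+1) ω)) Q) Set.univ := by
      rw [Measure.map_apply hvecmeas MeasurableSet.univ]
      simp
    rw [h1, hmapQ]
    simp
  -- marginals
  have hmarg : ∀ k, 1 ≤ k → k ≤ T →
      Measure.map (fun ω => ε k ω + μ k ω / σ k ω) Q = gaussianReal 0 1 := by
    intro k h1 h2
    have hkT : k - 1 < T := by omega
    have hk1 : k - 1 + 1 = k := by omega
    have hfun : (fun ω => ε k ω + μ k ω / σ k ω)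
        = (fun x : Fin T → ℝ => x (⟨k-1, hkT⟩ : Fin T)) ∘ (fun ω =>
          (fun i : Fin T => ε (i.val+1) ω + μ (i.val+1) ω / σ (i.val+1) ω)) := by
      funext ω
      show ε k ω + μ k ω / σ k ω = ε (k-1+1) ω + μ (k-1+1) ω / σ (k-1+1) ω
      rw [hk1]
    rw [hfun, ← Measure.map_map (measurable_pi_apply _) hvecmeas, hmapQ, map_eval_pi_gauss]
  refine ⟨?_, hmarg⟩
  -- independence
  rw [iIndepFun_iff_measure_inter_preimage_eq_mul]
  intro S sets H
  have hpre : (⋂ i ∈ S, (fun ω => ε (i.val+1) ω + μ (i.val+1) ω / σ (i.val+1) ω) ⁻¹' sets i)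
      = (fun ω => (fun i : Fin T => ε (i.val+1) ω + μ (i.val+1) ω / σ (i.val+1) ω))
        ⁻¹' (Set.pi ↑S sets) := by
    ext ω
    simp [Set.mem_pi]
  have hpiS : (Set.pi (↑S : Set (Fin T)) sets)
      = Set.pi Set.univ (fun i => if i ∈ S then sets i else Set.univ) := by
    ext x
    simp only [Set.mem_pi, Set.mem_univ, true_implies, Finset.mem_coe]
    constructor
    · intro h i
      by_cases hi : i ∈ S
      · simp [hi, h i hi]
      · simp [hi]
    · intro h i hi
      have := h i
      simp [hi] at this
      exact this
  rw [hpre, ← Measure.map_apply hvecmeas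
    (MeasurableSet.pi S.countable_toSet (fun i hi => H i hi)), hmapQ, hpiS, Measure.pi_pi]
  have hQm : ∀ i ∈ S, Q ((fun ω => ε (i.val+1) ω + μ (i.val+1) ω / σ (i.val+1) ω) ⁻¹' sets i)
      = (gaussianReal 0 1) (sets i) := by
    intro i hi
    rw [← Measure.map_apply (htildemeas (i.val+1) (by omega)) (H i hi),
      hmarg (i.val+1) (by omega) (by omega)]
  calc (∏ i : Fin T, (gaussianReal 0 1) (if i ∈ S then sets i else Set.univ))
      = ∏ i : Fin T, (if i ∈ S then (gaussianReal 0 1) (sets i) else 1) := by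
        refine Finset.prod_congr rfl fun i _ => ?_
        split <;> simp
    _ = ∏ i ∈ S, (gaussianReal 0 1) (sets i) := by
        rw [Finset.prod_ite_mem, Finset.univ_inter]
    _ = ∏ i ∈ S, Q ((fun ω => ε (i.val+1) ω + μ (i.val+1) ω / σ (i.val+1) ω) ⁻¹' sets i) :=
        (Finset.prod_congr rfl fun i hi => (hQm i hi).symm)
end

section
/- Let (Ω, F, ℙ) be a probability space, 𝒢 ⊆ F a sub-σ-algebra, a a 𝒢-measurable real random variable, and ε a standard normal random variable independent of 𝒢. Set Z := exp(−aε − a²/2). Then Z is integrable with E[Z | 𝒢] = 1 almost surely and E[Z] = 1, and under the probability measure Q with density Z with respect to ℙ, the random variable ε + a has standard normal distribution N(0,1) and is independent of 𝒢 under Q. -/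
open MeasureTheory ProbabilityTheory Real
open scoped ENNReal NNReal

lemma gauss_shift (c : ℝ) {B : Set ℝ} (hB : MeasurableSet B) :
    ∫⁻ y, B.indicator (1 : ℝ → ℝ≥0∞) (y + c)
      * ENNReal.ofReal (Real.exp (-(c * y) - c ^ 2 / 2)) ∂(gaussianReal 0 1)
      = gaussianReal 0 1 B := by
  have hmeas : Measurable fun y : ℝ => B.indicator (1 : ℝ → ℝ≥0∞) (y + c)
      * ENNReal.ofReal (Real.exp (-(c * y) - c ^ 2 / 2)) := by
    exact ((measurable_one.indicator hB).comp (measurable_id.add_const c)).mul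
      (Measurable.ennreal_ofReal (by fun_prop))
  rw [gaussianReal_of_var_ne_zero 0 one_ne_zero,
    lintegral_withDensity_eq_lintegral_mul _ (measurable_gaussianPDF 0 1) hmeas]
  have hpt : ∀ y : ℝ, (gaussianPDF 0 1 * fun y => B.indicator (1 : ℝ → ℝ≥0∞) (y + c)
      * ENNReal.ofReal (Real.exp (-(c * y) - c ^ 2 / 2))) y
      = (fun u => B.indicator (1 : ℝ → ℝ≥0∞) u * gaussianPDF 0 1 u) (y + c) := by
    intro y
    simp only [Pi.mul_apply]
    rw [← mul_assoc, mul_comm (gaussianPDF 0 1 y), mul_assoc]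
    congr 1
    simp only [gaussianPDF, gaussianPDFReal]
    rw [← ENNReal.ofReal_mul (by positivity)]
    congr 1
    rw [mul_assoc, ← Real.exp_add]
    congr 2
    push_cast
    ring
  calc ∫⁻ y, (gaussianPDF 0 1 * fun y => B.indicator (1 : ℝ → ℝ≥0∞) (y + c)
      * ENNReal.ofReal (Real.exp (-(c * y) - c ^ 2 / 2))) y
      = ∫⁻ y, (fun u => B.indicator (1 : ℝ → ℝ≥0∞) u * gaussianPDF 0 1 u) (y + c) :=
        lintegral_congr hpt
    _ = ∫⁻ u, B.indicator (1 : ℝ → ℝ≥0∞) u * gaussianPDF 0 1 u :=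
        lintegral_add_right_eq_self (μ := volume)
          (fun u => B.indicator (1 : ℝ → ℝ≥0∞) u * gaussianPDF 0 1 u) c
    _ = ∫⁻ u in B, gaussianPDF 0 1 u := by
        rw [← lintegral_indicator hB]
        refine lintegral_congr fun u => ?_
        by_cases hu : u ∈ B <;> simp [Set.indicator_apply, hu]
    _ = (volume.withDensity (gaussianPDF 0 1)) B := (withDensity_apply _ hB).symm

/-- (One-step discrete Girsanov transformation.) If `a` is
`𝒢`-measurable, `ε` is standard normal and independent of `𝒢`, and
`Z = exp(-aε - a²/2)`, then `Z` is integrable with `E[Z | 𝒢] = 1` a.s. and `E[Z] = 1`,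
and under `Q = P.withDensity Z` the random variable `ε + a` is standard normal and
independent of `𝒢`. -/
theorem stmt9 {Ω : Type*} (𝒢 : MeasurableSpace Ω) {m0 : MeasurableSpace Ω}
    (P : Measure Ω) [IsProbabilityMeasure P] (h𝒢 : 𝒢 ≤ m0)
    (a ε : Ω → ℝ) (hameas : Measurable[𝒢] a)
    (hεmeas : Measurable ε) (hεgauss : Measure.map ε P = gaussianReal 0 1)
    (hindep : Indep (MeasurableSpace.comap ε inferInstance) 𝒢 P)
    (Z : Ω → ℝ) (hZ : ∀ ω, Z ω = Real.exp (-(a ω * ε ω) - a ω ^ 2 / 2))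
    (Q : Measure Ω) (hQ : Q = P.withDensity fun ω => ENNReal.ofReal (Z ω)) :
    Integrable Z P ∧ (P[Z | 𝒢] =ᵐ[P] fun _ => 1) ∧ (∫ ω, Z ω ∂P = 1)
    ∧ Measure.map (fun ω => ε ω + a ω) Q = gaussianReal 0 1
    ∧ Indep (MeasurableSpace.comap (fun ω => ε ω + a ω) inferInstance) 𝒢 Q := by
  have ham0 : Measurable a := hameas.mono h𝒢 le_rfl
  have hZnn : ∀ ω, 0 ≤ Z ω := fun ω => (hZ ω) ▸ (Real.exp_pos _).le
  have hZmeas : Measurable Z := by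
    have h : Z = fun ω => Real.exp (-(a ω * ε ω) - a ω ^ 2 / 2) := funext hZ
    rw [h]; fun_prop
  have hsum : Measurable fun ω => ε ω + a ω := hεmeas.add ham0
  have key : ∀ s : Set Ω, MeasurableSet[𝒢] s → ∀ B : Set ℝ, MeasurableSet B →
      ∫⁻ ω in s ∩ (fun ω => ε ω + a ω) ⁻¹' B, ENNReal.ofReal (Z ω) ∂P
        = P s * gaussianReal 0 1 B := by
    intro s hs B hB
    set X : Ω → ℝ × ℝ := fun ω => (s.indicator (fun _ => (1:ℝ)) ω, a ω) with hXdef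
    have hXG : Measurable[𝒢] X := (measurable_const.indicator hs).prodMk hameas
    have hXm : Measurable X := hXG.mono h𝒢 le_rfl
    have hIF : IndepFun X ε P :=
      indep_of_indep_of_le_left hindep.symm (measurable_iff_comap_le.mp hXG)
    set f : (ℝ × ℝ) × ℝ → ℝ≥0∞ := fun p =>
      ENNReal.ofReal p.1.1 * (B.indicator (1 : ℝ → ℝ≥0∞) (p.2 + p.1.2)
        * ENNReal.ofReal (Real.exp (-(p.1.2 * p.2) - p.1.2 ^ 2 / 2))) with hfdef
    have hfmeas : Measurable f := by
      apply Measurable.mul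
      · fun_prop
      · exact ((measurable_one.indicator hB).comp
          (measurable_snd.add measurable_fst.snd)).mul (by fun_prop)
    have step1 : ∫⁻ ω in s ∩ (fun ω => ε ω + a ω) ⁻¹' B, ENNReal.ofReal (Z ω) ∂P
        = ∫⁻ ω, f (X ω, ε ω) ∂P := by
      rw [← lintegral_indicator ((h𝒢 s hs).inter (hsum hB))]
      refine lintegral_congr fun ω => ?_
      by_cases h1 : ω ∈ s <;> by_cases h2 : ε ω + a ω ∈ B <;>
        simp [hfdef, hXdef, Set.indicator_apply, h1, h2, hZ ω,
          Set.mem_inter_iff, Set.mem_preimage]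
    have hmap : P.map (fun ω => (X ω, ε ω)) = (P.map X).prod (P.map ε) :=
      (indepFun_iff_map_prod_eq_prod_map_map hXm.aemeasurable hεmeas.aemeasurable).mp hIF
    have step2 : ∫⁻ ω, f (X ω, ε ω) ∂P
        = ∫⁻ x, ∫⁻ y, f (x, y) ∂(gaussianReal 0 1) ∂(P.map X) := by
      rw [← lintegral_map hfmeas (hXm.prodMk hεmeas), hmap, ← hεgauss]
      exact lintegral_prod f hfmeas.aemeasurable
    have step3 : ∀ x : ℝ × ℝ, ∫⁻ y, f (x, y) ∂(gaussianReal 0 1)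
        = ENNReal.ofReal x.1 * gaussianReal 0 1 B := by
      intro x
      have h1 : ∀ y : ℝ, f (x, y) = ENNReal.ofReal x.1 *
          (B.indicator (1 : ℝ → ℝ≥0∞) (y + x.2)
            * ENNReal.ofReal (Real.exp (-(x.2 * y) - x.2 ^ 2 / 2))) := fun y => rfl
      rw [lintegral_congr h1, lintegral_const_mul' _ _ ENNReal.ofReal_ne_top,
        gauss_shift x.2 hB]
    have step4 : ∫⁻ x, ENNReal.ofReal x.1 * gaussianReal 0 1 B ∂(P.map X)
        = P s * gaussianReal 0 1 B := by
      rw [lintegral_mul_const' _ _ (measure_ne_top _ _)]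
      congr 1
      rw [lintegral_map (by fun_prop) hXm]
      have h2 : ∀ ω, ENNReal.ofReal ((X ω).1)
          = s.indicator (fun _ => (1:ℝ≥0∞)) ω := by
        intro ω; by_cases h : ω ∈ s <;> simp [hXdef, Set.indicator_apply, h]
      rw [lintegral_congr h2, lintegral_indicator (h𝒢 s hs)]
      simp
    rw [step1, step2, lintegral_congr step3, step4]
  have hlintZ : ∫⁻ ω, ENNReal.ofReal (Z ω) ∂P = 1 := by
    have h := key Set.univ MeasurableSet.univ Set.univ MeasurableSet.univ
    simpa using h
  have hint : Integrable Z P := by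
    refine ⟨hZmeas.aestronglyMeasurable, ?_⟩
    rw [hasFiniteIntegral_iff_ofReal (ae_of_all _ hZnn), hlintZ]
    exact ENNReal.one_lt_top
  have hIntEq : ∫ ω, Z ω ∂P = 1 := by
    rw [integral_eq_lintegral_of_nonneg_ae (ae_of_all _ hZnn)
      hZmeas.aestronglyMeasurable, hlintZ]
    simp
  have hsetZ : ∀ s : Set Ω, MeasurableSet[𝒢] s →
      ∫⁻ ω in s, ENNReal.ofReal (Z ω) ∂P = P s := by
    intro s hs
    have h := key s hs Set.univ MeasurableSet.univ
    simpa using h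
  have hcond : P[Z|𝒢] =ᵐ[P] fun _ => 1 := by
    refine (ae_eq_condExp_of_forall_setIntegral_eq h𝒢 hint ?_ ?_ ?_).symm
    · intro s hs hμs
      exact integrableOn_const hμs.ne
    · intro s hs hμs
      rw [setIntegral_const, integral_eq_lintegral_of_nonneg_ae (ae_of_all _ hZnn)
        hZmeas.aestronglyMeasurable.restrict, hsetZ s hs]
      simp [Measure.real]
    · exact stronglyMeasurable_const.aestronglyMeasurable
  have hQpre : ∀ B : Set ℝ, MeasurableSet B →
      Q ((fun ω => ε ω + a ω) ⁻¹' B) = gaussianReal 0 1 B := by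
    intro B hB
    rw [hQ, withDensity_apply _ (hsum hB)]
    have h := key Set.univ MeasurableSet.univ B hB
    simpa using h
  have hmapQ : Measure.map (fun ω => ε ω + a ω) Q = gaussianReal 0 1 := by
    ext B hB
    rw [Measure.map_apply hsum hB, hQpre B hB]
  have hindepQ : Indep (MeasurableSpace.comap (fun ω => ε ω + a ω) inferInstance) 𝒢 Q := by
    rw [Indep_iff]
    rintro t1 t2 ⟨B, hB, rfl⟩ ht2
    have h1 : Q ((fun ω => ε ω + a ω) ⁻¹' B ∩ t2) = P t2 * gaussianReal 0 1 B := by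
      rw [hQ, withDensity_apply _ ((hsum hB).inter (h𝒢 t2 ht2)), Set.inter_comm]
      exact key t2 ht2 B hB
    have h2 : Q t2 = P t2 := by
      rw [hQ, withDensity_apply _ (h𝒢 t2 ht2)]
      exact hsetZ t2 ht2
    rw [h1, hQpre B hB, h2, mul_comm]
  exact ⟨hint, hcond, hIntEq, hmapQ, hindepQ⟩
end

section
/- Consider the GARCH log-price setup: (ε_n)_{n=1}^T i.i.d. standard normal on (Ω, F, ℙ), filtration F_n = σ(ε_1,…,ε_n), predictable processes (μ_n), (σ_n) with σ_n > 0, σ_n² ≥ ω > 0 and |μ_n| ≤ B almost surely, s_n = s_0 + Σ_{k=1}^n (μ_k + σ_k ε_k), and Q the measure with density Z_T := Π_{k=1}^T exp(−(μ_k/σ_k)ε_k − μ_k²/(2σ_k²)) with respect to ℙ. If E[σ_k⁴ε_k⁴] < ∞ for every k ≤ T (finite kurtosis under ℙ), then E_Q[s_n²] < ∞ for every n ≤ T; that is, the Q-martingale of log-prices is square-integrable with respect to Q. -/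
open MeasureTheory ProbabilityTheory
open Real
open scoped ENNReal NNReal


lemma stmt12_int_exp_lin (t : ℝ) :
    Integrable (fun x => Real.exp (t * x)) (gaussianReal 0 1) := by
  rw [gaussianReal_of_var_ne_zero 0 one_ne_zero,
    integrable_withDensity_iff (measurable_gaussianPDF 0 1)
      (ae_of_all _ fun x => ENNReal.ofReal_lt_top)]
  have h : (fun x => Real.exp (t * x) * (gaussianPDF 0 1 x).toReal)
      = fun x => ((Real.sqrt (2 * π))⁻¹ * Real.exp (t ^ 2 / 2)) *
          Real.exp (-(2⁻¹) * (x - t) ^ 2) := by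
    funext x
    rw [gaussianPDF, ENNReal.toReal_ofReal (gaussianPDFReal_nonneg _ _ _), gaussianPDFReal]
    simp only [NNReal.coe_one, mul_one, sub_zero]
    rw [mul_comm (Real.exp (t * x)), mul_assoc, ← Real.exp_add, mul_assoc, ← Real.exp_add]
    congr 1
    ring_nf
  rw [h]
  exact ((integrable_exp_neg_mul_sq (by norm_num : (0:ℝ) < 2⁻¹)).comp_sub_right t).const_mul _

lemma stmt12_int_exp_abs (t : ℝ) :
    Integrable (fun x => Real.exp (t * |x|)) (gaussianReal 0 1) := by
  refine ((stmt12_int_exp_lin t).add (stmt12_int_exp_lin (-t))).mono'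
    ((measurable_abs.const_mul t).exp.aestronglyMeasurable) (ae_of_all _ fun x => ?_)
  rw [Real.norm_eq_abs, abs_of_pos (Real.exp_pos _)]
  rcases abs_cases x with ⟨h, _⟩ | ⟨h, _⟩
  · rw [h]
    exact le_add_of_nonneg_right (Real.exp_pos _).le
  · rw [h, mul_neg, ← neg_mul]
    exact le_add_of_nonneg_left (Real.exp_pos _).le

lemma stmt12_memLp4 {Ω : Type*} {m0 : MeasurableSpace Ω} {P : Measure Ω} {f : Ω → ℝ}
    (hf : AEStronglyMeasurable f P) :
    MemLp f 4 P ↔ Integrable (fun ω => f ω ^ 4) P := by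
  rw [← memLp_one_iff_integrable]
  have h4 : (4 : ℝ≥0∞) ≠ 0 := by norm_num
  have h4' : (4 : ℝ≥0∞) ≠ ∞ := by norm_num
  convert (memLp_norm_rpow_iff (p := 4) hf h4 h4').symm using 2
  · funext x
    rw [Real.norm_eq_abs, ENNReal.toReal_ofNat,
      show ((4:ℝ)) = ((4:ℕ):ℝ) from by norm_num, Real.rpow_natCast, ← abs_pow,
      abs_of_nonneg (by positivity)]
  · rw [ENNReal.div_self h4 h4']

lemma stmt12_prod_Icc_one {M : Type*} [CommMonoid M] (f : ℕ → M) (T : ℕ) :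
    ∏ k ∈ Finset.Icc 1 T, f k = ∏ i ∈ Finset.range T, f (i + 1) := by
  induction T with
  | zero => simp
  | succ T ih => rw [Finset.prod_Icc_succ_top (by omega), ih, Finset.prod_range_succ]


/-- In the GARCH log-price setup with `σ_k² ≥ ω₀ > 0` and `|μ_k| ≤ B`
a.s., if the process has finite kurtosis under `P` (`E[σ_k⁴ε_k⁴] < ∞` for all `k ≤ T`),
then the log-prices are square-integrable under the Girsanov-type martingale measure `Q`
with density `Z_T = Π_{k=1}^T exp(-(μ_k/σ_k)ε_k - μ_k²/(2σ_k²))`: `E_Q[s_n²] < ∞` for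
every `n ≤ T`. -/
theorem stmt12 {Ω : Type*} {m0 : MeasurableSpace Ω}
    (P : Measure Ω) [IsProbabilityMeasure P]
    (T : ℕ) (ε : ℕ → Ω → ℝ) (hεmeas : ∀ k, Measurable (ε k))
    (hεindep : iIndepFun (fun i : Fin T => ε (i.val + 1)) P)
    (hεgauss : ∀ k, 1 ≤ k → k ≤ T → Measure.map (ε k) P = gaussianReal 0 1)
    (F : ℕ → MeasurableSpace Ω)
    (hF : ∀ n, F n = ⨆ k ∈ Finset.Icc 1 n, MeasurableSpace.comap (ε k) inferInstance)
    (μ σ : ℕ → Ω → ℝ)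
    (hμpred : ∀ k, 1 ≤ k → Measurable[F (k - 1)] (μ k))
    (hσpred : ∀ k, 1 ≤ k → Measurable[F (k - 1)] (σ k))
    (hσpos : ∀ k ω, 0 < σ k ω)
    (B ω₀ : ℝ) (hω₀ : 0 < ω₀)
    (hbound : ∀ k, 1 ≤ k → k ≤ T → ∀ᵐ ω ∂P, |μ k ω| ≤ B ∧ ω₀ ≤ σ k ω ^ 2)
    (hkurt : ∀ k, 1 ≤ k → k ≤ T → Integrable (fun ω => (σ k ω * ε k ω) ^ 4) P)
    (s0 : ℝ) (s : ℕ → Ω → ℝ)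
    (hs : ∀ n ω, s n ω = s0 + ∑ k ∈ Finset.Icc 1 n, (μ k ω + σ k ω * ε k ω))
    (Z : Ω → ℝ)
    (hZ : ∀ ω, Z ω = ∏ k ∈ Finset.Icc 1 T,
        Real.exp (-(μ k ω / σ k ω) * ε k ω - μ k ω ^ 2 / (2 * σ k ω ^ 2)))
    (Q : Measure Ω) (hQ : Q = P.withDensity fun ω => ENNReal.ofReal (Z ω)) :
    ∀ n, n ≤ T → Integrable (fun ω => s n ω ^ 2) Q := by
  classical
  intro n hn
  -- basic measurability
  have hFle : ∀ k, F k ≤ m0 := by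
    intro k
    rw [hF k]
    exact iSup₂_le fun i _ => (hεmeas i).comap_le
  have hμm : ∀ k, 1 ≤ k → Measurable (μ k) := fun k hk =>
    (hμpred k hk).mono (hFle (k - 1)) le_rfl
  have hσm : ∀ k, 1 ≤ k → Measurable (σ k) := fun k hk =>
    (hσpred k hk).mono (hFle (k - 1)) le_rfl
  have hZeq : Z = fun ω => ∏ k ∈ Finset.Icc 1 T,
      Real.exp (-(μ k ω / σ k ω) * ε k ω - μ k ω ^ 2 / (2 * σ k ω ^ 2)) := funext hZ
  have hZm : Measurable Z := by
    rw [hZeq]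
    refine Finset.measurable_prod _ fun k hk => ?_
    have hk1 : 1 ≤ k := (Finset.mem_Icc.1 hk).1
    exact ((((hμm k hk1).div (hσm k hk1)).neg.mul (hεmeas k)).sub
      (((hμm k hk1).pow_const 2).div (measurable_const.mul ((hσm k hk1).pow_const 2)))).exp
  have hZnn : ∀ ω, 0 ≤ Z ω := fun ω => by
    rw [hZ]
    exact Finset.prod_nonneg fun k _ => (Real.exp_pos _).le
  -- `s n` is in `L⁴`
  have hsmeas : Measurable (s n) := by
    rw [show s n = fun ω => s0 + ∑ k ∈ Finset.Icc 1 n, (μ k ω + σ k ω * ε k ω)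
      from funext (hs n)]
    refine measurable_const.add (Finset.measurable_sum _ fun k hk => ?_)
    have hk1 : 1 ≤ k := (Finset.mem_Icc.1 hk).1
    exact (hμm k hk1).add ((hσm k hk1).mul (hεmeas k))
  have hs4 : MemLp (s n) 4 P := by
    rw [show s n = fun ω => s0 + ∑ k ∈ Finset.Icc 1 n, (μ k ω + σ k ω * ε k ω)
      from funext (hs n)]
    refine (memLp_const s0).add (memLp_finsetSum _ fun k hk => ?_)
    have hk1 : 1 ≤ k := (Finset.mem_Icc.1 hk).1
    have hkT : k ≤ T := (Finset.mem_Icc.1 hk).2.trans hn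
    refine MemLp.add ?_ ?_
    · refine MemLp.of_bound (hμm k hk1).aestronglyMeasurable B ?_
      filter_upwards [hbound k hk1 hkT] with ω hω
      rw [Real.norm_eq_abs]
      exact hω.1
    · exact (stmt12_memLp4 ((hσm k hk1).mul (hεmeas k)).aestronglyMeasurable).2
        (hkurt k hk1 hkT)
  have hs4int : Integrable (fun ω => s n ω ^ 4) P :=
    (stmt12_memLp4 hsmeas.aestronglyMeasurable).1 hs4
  have hssq2 : MemLp (fun ω => s n ω ^ 2) 2 P := by
    refine (memLp_two_iff_integrable_sq (hsmeas.pow_const 2).aestronglyMeasurable).2 ?_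
    have : (fun ω => (s n ω ^ 2) ^ 2) = fun ω => s n ω ^ 4 := by
      funext ω; ring
    rw [this]
    exact hs4int
  -- `Z` is in `L²`
  set B' : ℝ := max B 0 with hB'
  have hB'0 : (0:ℝ) ≤ B' := le_max_right _ _
  set c : ℝ := 2 * (B' / Real.sqrt ω₀) with hc
  set g : ℝ → ℝ := fun x => Real.exp (c * |x|) with hg
  have hgm : Measurable g := (measurable_abs.const_mul c).exp
  -- integrability of each factor
  have hXint : ∀ i : Fin T, Integrable (fun ω => g (ε (i.val + 1) ω)) P := by
    intro i
    have h1 : (1:ℕ) ≤ i.val + 1 := le_add_self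
    have h2 : i.val + 1 ≤ T := i.isLt
    have := stmt12_int_exp_abs c
    rw [← hεgauss (i.val + 1) h1 h2] at this
    exact (integrable_map_measure hgm.aestronglyMeasurable
      (hεmeas (i.val + 1)).aemeasurable).1 this
  -- independence, product integrability
  have hXmeas : ∀ i : Fin T, Measurable (fun ω => g (ε (i.val + 1) ω)) := fun i =>
    hgm.comp (hεmeas _)
  have hXindep : iIndepFun
      (fun i : Fin T => fun ω => g (ε (i.val + 1) ω)) P :=
    hεindep.comp (fun _ => g) fun _ => hgm
  have key : ∀ u : Finset (Fin T),
      Integrable (fun ω => ∏ i ∈ u, g (ε (i.val + 1) ω)) P := by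
    intro u
    induction u using Finset.induction_on with
    | empty => simp only [Finset.prod_empty]; exact integrable_const (1:ℝ)
    | @insert j u' hj ih =>
      have hind : IndepFun (∏ i ∈ u', fun ω => g (ε (i.val + 1) ω))
          (fun ω => g (ε (j.val + 1) ω)) P :=
        hXindep.indepFun_finsetProd_of_notMem hXmeas hj
      have hmul := hind.symm.integrable_mul (hXint j) (by
        have : (∏ i ∈ u', fun ω => g (ε (i.val + 1) ω))
            = fun ω => ∏ i ∈ u', g (ε (i.val + 1) ω) := by
          funext ω; simp [Finset.prod_apply]
        rw [this]; exact ih)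
      have : ((fun ω => g (ε (j.val + 1) ω)) * ∏ i ∈ u', fun ω => g (ε (i.val + 1) ω))
          = fun ω => ∏ i ∈ insert j u', g (ε (i.val + 1) ω) := by
        funext ω
        simp [Finset.prod_insert hj, Finset.prod_apply]
      rwa [this] at hmul
  have hGint : Integrable (fun ω => ∏ k ∈ Finset.Icc 1 T, g (ε k ω)) P := by
    have h1 : (fun ω => ∏ k ∈ Finset.Icc 1 T, g (ε k ω))
        = fun ω => ∏ i : Fin T, g (ε (i.val + 1) ω) := by
      funext ω
      rw [stmt12_prod_Icc_one (fun k => g (ε k ω)) T,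
        Fin.prod_univ_eq_prod_range (fun i => g (ε (i + 1) ω)) T]
    rw [h1]
    exact key Finset.univ
  -- a.e. bound on `Z²`
  have hball : ∀ᵐ ω ∂P, ∀ k ∈ Finset.Icc 1 T, |μ k ω| ≤ B ∧ ω₀ ≤ σ k ω ^ 2 := by
    rw [Filter.eventually_all_finset]
    intro k hk
    exact hbound k (Finset.mem_Icc.1 hk).1 (Finset.mem_Icc.1 hk).2
  have hZsq : Integrable (fun ω => Z ω ^ 2) P := by
    refine hGint.mono' ((hZm.pow_const 2).aestronglyMeasurable) ?_
    filter_upwards [hball] with ω hω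
    rw [Real.norm_eq_abs, abs_of_nonneg (sq_nonneg _), hZ, ← Finset.prod_pow]
    refine Finset.prod_le_prod (fun k _ => sq_nonneg _) fun k hk => ?_
    obtain ⟨hμB, hσω⟩ := hω k hk
    have hσp : 0 < σ k ω := hσpos k ω
    have hsq : Real.sqrt ω₀ ≤ σ k ω := by
      have := Real.sqrt_le_sqrt hσω
      rwa [Real.sqrt_sq hσp.le] at this
    have hsp : 0 < Real.sqrt ω₀ := Real.sqrt_pos.2 hω₀
    rw [show (2:ℕ) = 2 from rfl, ← Real.exp_nat_mul]
    refine Real.exp_le_exp.2 ?_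
    have h1 : -(μ k ω / σ k ω) * ε k ω ≤ B' / Real.sqrt ω₀ * |ε k ω| := by
      calc -(μ k ω / σ k ω) * ε k ω ≤ |(-(μ k ω / σ k ω)) * ε k ω| := le_abs_self _
        _ = |μ k ω| / σ k ω * |ε k ω| := by
            rw [abs_mul, abs_neg, abs_div, abs_of_pos hσp]
        _ ≤ B' / Real.sqrt ω₀ * |ε k ω| := by
            refine mul_le_mul_of_nonneg_right ?_ (abs_nonneg _)
            exact div_le_div₀ hB'0 (hμB.trans (le_max_left _ _)) hsp hsq
    have h2 : 0 ≤ μ k ω ^ 2 / (2 * σ k ω ^ 2) := by positivity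
    have hcd : c * |ε k ω| = 2 * (B' / Real.sqrt ω₀ * |ε k ω|) := by
      rw [hc]; ring
    rw [hcd]
    push_cast
    linarith
  have hZ2 : MemLp Z 2 P :=
    (memLp_two_iff_integrable_sq hZm.aestronglyMeasurable).2 hZsq
  -- conclude
  rw [hQ, integrable_withDensity_iff hZm.ennreal_ofReal
    (ae_of_all _ fun ω => ENNReal.ofReal_lt_top)]
  have heq : (fun ω => s n ω ^ 2 * (ENNReal.ofReal (Z ω)).toReal)
      = fun ω => Z ω * s n ω ^ 2 := by
    funext ω
    rw [ENNReal.toReal_ofReal (hZnn ω), mul_comm]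
  rw [heq]
  have hmul : MemLp (Z • fun ω => s n ω ^ 2) 1 P :=
    hssq2.smul hZ2
  exact memLp_one_iff_integrable.1 hmul
end

section
/- Consider the Heston–Nandi model: on (Ω, F, ℙ), (ε_n)_{n=1}^T i.i.d. standard normal, F_n = σ(ε_1,…,ε_n), λ ∈ ℝ, log-prices s_n − s_{n−1} = λσ_n² + σ_nε_n with σ_n² = α_0 + Σ_{i=1}^q α_i (ε_{n−i} − γ_i σ_{n−i})² + Σ_{j=1}^p β_j σ_{n−j}² (α_0 > 0, α_i, β_j ≥ 0, γ_i ∈ ℝ, given strictly positive initial data), and prices S_n = exp(s_n). Let Q be the measure with density Π_{k=1}^T exp(−(λ+½)σ_kε_k − (λ+½)²σ_k²/2) with respect to ℙ. Then: (a) the variables ε̃_n := ε_n + (λ+½)σ_n are i.i.d. standard normal under Q; (b) s_n − s_{n−1} = −σ_n²/2 + σ_nε̃_n and σ_n² = α_0 + Σ_{i=1}^q α_i (ε̃_{n−i} − (λ + γ_i + ½)σ_{n−i})² + Σ_{j=1}^p β_j σ_{n−j}²; and (c) the price process (S_n)_{n=0}^T is a martingale with respect to (F_n) under Q. -/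
open MeasureTheory ProbabilityTheory

noncomputable section

/-- evaluation of the ε-path: constants for nonpositive indices. -/
def hnEv (εc : ℤ → ℝ) (m : ℤ) (x : ℕ → ℝ) : ℝ := if m ≤ 0 then εc m else x m.toNat

/-- the volatility as a function of the ε-path (natural index version). -/
def hnGs (α0 : ℝ) (αf βf γf : ℕ → ℝ) (p q : ℕ) (εc σc : ℤ → ℝ) : ℕ → (ℕ → ℝ) → ℝ
  | 0, _ => σc 0
  | (m+1), x =>
      Real.sqrt (α0
        + (∑ i ∈ Finset.Icc 1 q, αf i *
            (hnEv εc ((m : ℤ) + 1 - i) x - γf i *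
              (if (m : ℤ) + 1 - (i : ℤ) ≤ 0 then σc ((m : ℤ) + 1 - i)
                else hnGs α0 αf βf γf p q εc σc (m - (i-1)) x)) ^ 2)
        + ∑ j ∈ Finset.Icc 1 p, βf j *
            (if (m : ℤ) + 1 - (j : ℤ) ≤ 0 then σc ((m : ℤ) + 1 - j)
              else hnGs α0 αf βf γf p q εc σc (m - (j-1)) x) ^ 2)
  decreasing_by all_goals omega

/-- the volatility as a function of the ε-path (integer index version). -/
def hnGsZ (α0 : ℝ) (αf βf γf : ℕ → ℝ) (p q : ℕ) (εc σc : ℤ → ℝ) (n : ℤ) :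
    (ℕ → ℝ) → ℝ :=
  if n ≤ 0 then fun _ => σc n else hnGs α0 αf βf γf p q εc σc n.toNat

variable {α0 : ℝ} {αf βf γf : ℕ → ℝ} {p q : ℕ} {εc σc : ℤ → ℝ}

lemma hnGsZ_nonpos {n : ℤ} (hn : n ≤ 0) (x : ℕ → ℝ) :
    hnGsZ α0 αf βf γf p q εc σc n x = σc n := by
  simp [hnGsZ, hn]

lemma hnGsZ_toNat {n : ℤ} (hn : 1 ≤ n) :
    hnGsZ α0 αf βf γf p q εc σc n = hnGs α0 αf βf γf p q εc σc n.toNat :=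
  if_neg (by omega)

lemma hnGsZ_succ {n : ℤ} (hn : 1 ≤ n) (x : ℕ → ℝ) :
    hnGsZ α0 αf βf γf p q εc σc n x =
      Real.sqrt (α0
        + (∑ i ∈ Finset.Icc 1 q, αf i *
            (hnEv εc (n - i) x - γf i * hnGsZ α0 αf βf γf p q εc σc (n - i) x) ^ 2)
        + ∑ j ∈ Finset.Icc 1 p, βf j * hnGsZ α0 αf βf γf p q εc σc (n - j) x ^ 2) := by
  obtain ⟨m, hm⟩ : ∃ m : ℕ, n.toNat = m + 1 := ⟨n.toNat - 1, by omega⟩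
  have hnm : n = (m : ℤ) + 1 := by omega
  have hterm : ∀ i : ℕ, 1 ≤ i →
      hnGsZ α0 αf βf γf p q εc σc (n - i) x =
        (if (m : ℤ) + 1 - (i : ℤ) ≤ 0 then σc ((m : ℤ) + 1 - i)
          else hnGs α0 αf βf γf p q εc σc (m - (i-1)) x) := by
    intro i hi1
    by_cases h : (m : ℤ) + 1 - (i : ℤ) ≤ 0
    · rw [if_pos h, hnGsZ_nonpos (by omega)]
      congr 1
      omega
    · rw [if_neg h, hnGsZ_toNat (n := n - i) (by omega)]
      congr 1
      omega
  rw [hnGsZ_toNat hn, hm, hnGs]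
  congr 2
  · congr 1
    refine Finset.sum_congr rfl fun i hi => ?_
    have hi1 : 1 ≤ i := (Finset.mem_Icc.mp hi).1
    rw [hterm i hi1, show (m : ℤ) + 1 - (i : ℤ) = n - i from by omega]
  · refine Finset.sum_congr rfl fun j hj => ?_
    have hj1 : 1 ≤ j := (Finset.mem_Icc.mp hj).1
    rw [hterm j hj1, show (m : ℤ) + 1 - (j : ℤ) = n - j from by omega]

lemma hnGs_congr : ∀ (m : ℕ) (x y : ℕ → ℝ),
    (∀ j : ℕ, 1 ≤ j → j < m → x j = y j) →
    hnGs α0 αf βf γf p q εc σc m x = hnGs α0 αf βf γf p q εc σc m y := by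
  intro m
  induction m using Nat.strong_induction_on with
  | _ m ih =>
    match m with
    | 0 => intro x y _; rw [hnGs, hnGs]
    | Nat.succ m =>
      intro x y hxy
      rw [hnGs, hnGs]
      congr 2
      · congr 1
        refine Finset.sum_congr rfl fun i hi => ?_
        have hi1 : 1 ≤ i := (Finset.mem_Icc.mp hi).1
        have h1 : hnEv εc ((m : ℤ) + 1 - i) x = hnEv εc ((m : ℤ) + 1 - i) y := by
          unfold hnEv
          split_ifs with h
          · rfl
          · exact hxy _ (by omega) (by omega)
        have h2 : (if (m : ℤ) + 1 - (i : ℤ) ≤ 0 then σc ((m : ℤ) + 1 - i)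
              else hnGs α0 αf βf γf p q εc σc (m - (i-1)) x)
            = (if (m : ℤ) + 1 - (i : ℤ) ≤ 0 then σc ((m : ℤ) + 1 - i)
              else hnGs α0 αf βf γf p q εc σc (m - (i-1)) y) := by
          split_ifs with h
          · rfl
          · exact ih (m - (i-1)) (by omega) x y fun j h1 h2 => hxy j h1 (by omega)
        rw [h1, h2]
      · refine Finset.sum_congr rfl fun j hj => ?_
        have hj1 : 1 ≤ j := (Finset.mem_Icc.mp hj).1
        have h2 : (if (m : ℤ) + 1 - (j : ℤ) ≤ 0 then σc ((m : ℤ) + 1 - j)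
              else hnGs α0 αf βf γf p q εc σc (m - (j-1)) x)
            = (if (m : ℤ) + 1 - (j : ℤ) ≤ 0 then σc ((m : ℤ) + 1 - j)
              else hnGs α0 αf βf γf p q εc σc (m - (j-1)) y) := by
          split_ifs with h
          · rfl
          · exact ih (m - (j-1)) (by omega) x y fun j h1 h2 => hxy j h1 (by omega)
        rw [h2]

lemma hnGsZ_congr {n : ℤ} (x y : ℕ → ℝ)
    (hxy : ∀ j : ℕ, 1 ≤ j → (j : ℤ) < n → x j = y j) :
    hnGsZ α0 αf βf γf p q εc σc n x = hnGsZ α0 αf βf γf p q εc σc n y := by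
  rw [hnGsZ]
  split_ifs with h
  · rfl
  · exact hnGs_congr n.toNat x y fun j h1 h2 => hxy j h1 (by omega)

lemma hnGs_measurable : ∀ m : ℕ, Measurable (hnGs α0 αf βf γf p q εc σc m) := by
  intro m
  induction m using Nat.strong_induction_on with
  | _ m ih =>
    match m with
    | 0 =>
      have : hnGs α0 αf βf γf p q εc σc 0 = fun _ => σc 0 := by
        funext x; rw [hnGs]
      rw [this]; exact measurable_const
    | Nat.succ m =>
      have : hnGs α0 αf βf γf p q εc σc (m+1) = fun x =>
        Real.sqrt (α0
        + (∑ i ∈ Finset.Icc 1 q, αf i *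
            (hnEv εc ((m : ℤ) + 1 - i) x - γf i *
              (if (m : ℤ) + 1 - (i : ℤ) ≤ 0 then σc ((m : ℤ) + 1 - i)
                else hnGs α0 αf βf γf p q εc σc (m - (i-1)) x)) ^ 2)
        + ∑ j ∈ Finset.Icc 1 p, βf j *
            (if (m : ℤ) + 1 - (j : ℤ) ≤ 0 then σc ((m : ℤ) + 1 - j)
              else hnGs α0 αf βf γf p q εc σc (m - (j-1)) x) ^ 2) := by
        funext x; rw [hnGs]
      rw [this]
      apply Measurable.comp Real.continuous_sqrt.measurable
      apply Measurable.add
      · apply Measurable.add measurable_const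
        apply Finset.measurable_sum
        intro i hi
        apply Measurable.const_mul
        apply Measurable.pow_const
        apply Measurable.sub
        · unfold hnEv
          split_ifs with h
          · exact measurable_const
          · exact measurable_pi_apply _
        · apply Measurable.const_mul
          split_ifs with h
          · exact measurable_const
          · exact ih _ (by omega)
      · apply Finset.measurable_sum
        intro j hj
        apply Measurable.const_mul
        apply Measurable.pow_const
        split_ifs with h
        · exact measurable_const
        · exact ih _ (by omega)

lemma hnGsZ_measurable (n : ℤ) : Measurable (hnGsZ α0 αf βf γf p q εc σc n) := by
  rw [hnGsZ]
  split_ifs with h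
  · exact measurable_const
  · exact hnGs_measurable _

end

open Real
open scoped ENNReal NNReal

lemma hn_gauss_shift (c : ℝ) (f : ℝ → ℝ≥0∞) (hf : Measurable f) :
    ∫⁻ x, ENNReal.ofReal (Real.exp (-(c * x) - c ^ 2 / 2)) * f (x + c)
      ∂(gaussianReal 0 1) = ∫⁻ x, f x ∂(gaussianReal 0 1) := by
  rw [gaussianReal_of_var_ne_zero 0 one_ne_zero]
  rw [lintegral_withDensity_eq_lintegral_mul _ (measurable_gaussianPDF 0 1)
    (by
      apply Measurable.mul
      · exact (measurable_const.mul measurable_id).neg.sub_const _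
          |>.exp.ennreal_ofReal
      · exact hf.comp (measurable_id.add_const c)),
    lintegral_withDensity_eq_lintegral_mul _ (measurable_gaussianPDF 0 1) hf]
  have key : ∀ x : ℝ, (gaussianPDF 0 1 * fun x => ENNReal.ofReal
        (Real.exp (-(c * x) - c ^ 2 / 2)) * f (x + c)) x
      = (fun y => (gaussianPDF 0 1 * f) y) (x + c) := by
    intro x
    simp only [Pi.mul_apply, gaussianPDF]
    rw [← mul_assoc, ← ENNReal.ofReal_mul (gaussianPDFReal_nonneg 0 1 x)]
    congr 2
    simp only [gaussianPDFReal, NNReal.coe_one, mul_one, sub_zero]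
    rw [mul_assoc, ← Real.exp_add]
    congr 2
    ring
  calc ∫⁻ x, (gaussianPDF 0 1 * fun x => ENNReal.ofReal
        (Real.exp (-(c * x) - c ^ 2 / 2)) * f (x + c)) x
      = ∫⁻ x, (fun y => (gaussianPDF 0 1 * f) y) (x + c) := by
        exact lintegral_congr key
    _ = ∫⁻ x, (gaussianPDF 0 1 * f) x := lintegral_add_right_eq_self _ c

lemma hn_gauss_exp (a b : ℝ) :
    ∫⁻ x, ENNReal.ofReal (Real.exp (a * x + b)) ∂(gaussianReal 0 1)
      = ENNReal.ofReal (Real.exp (a ^ 2 / 2 + b)) := by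
  have h := hn_gauss_shift (-a) (fun _ => ENNReal.ofReal (Real.exp (a ^ 2 / 2 + b)))
    measurable_const
  have h2 : ∀ x : ℝ, ENNReal.ofReal (Real.exp (-(-a * x) - (-a) ^ 2 / 2)) *
      ENNReal.ofReal (Real.exp (a ^ 2 / 2 + b)) = ENNReal.ofReal (Real.exp (a * x + b)) := by
    intro x
    rw [← ENNReal.ofReal_mul (Real.exp_nonneg _), ← Real.exp_add]
    congr 1
    ring
  rw [lintegral_congr fun x => h2 x] at h
  rw [h, lintegral_const]
  simp


/-- (Heston–Nandi model under the Girsanov-type measure.) For the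
Heston–Nandi log-prices `s_n - s_{n-1} = λσ_n² + σ_nε_n` with
`σ_n² = α₀ + Σ α_i(ε_{n-i} - γ_iσ_{n-i})² + Σ β_j σ_{n-j}²` (strictly positive
deterministic initial data) and prices `S_n = exp(s_n)`, under the measure `Q` with
density `Π_{k=1}^T exp(-(λ+½)σ_kε_k - (λ+½)²σ_k²/2)`: (a) `ε̃_n = ε_n + (λ+½)σ_n` are
i.i.d. standard normal under `Q`; (b) `s_n - s_{n-1} = -σ_n²/2 + σ_nε̃_n` and
`σ_n² = α₀ + Σ α_i(ε̃_{n-i} - (λ+γ_i+½)σ_{n-i})² + Σ β_j σ_{n-j}²`; and (c) `(S_n)` is a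
`(F_n)`-martingale under `Q`. -/
theorem stmt18 {Ω : Type*} {m0 : MeasurableSpace Ω}
    (P : Measure Ω) [IsProbabilityMeasure P]
    (T p q : ℕ) (lam α0 : ℝ) (α β : ℕ → ℝ) (γ : ℕ → ℝ) (hα0 : 0 < α0)
    (hα : ∀ i ∈ Finset.Icc 1 q, 0 ≤ α i) (hβ : ∀ j ∈ Finset.Icc 1 p, 0 ≤ β j)
    (ε : ℤ → Ω → ℝ) (hεmeas : ∀ k, Measurable (ε k))
    (hεindep : iIndepFun (fun i : Fin T => ε ((i.val : ℤ) + 1)) P)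
    (hεgauss : ∀ k : ℤ, 1 ≤ k → k ≤ (T : ℤ) → Measure.map (ε k) P = gaussianReal 0 1)
    (hεinit : ∀ k : ℤ, k ≤ 0 → ∃ c : ℝ, 0 < c ∧ ∀ ω, ε k ω = c)
    (σ : ℤ → Ω → ℝ) (hσpos : ∀ k ω, 0 < σ k ω)
    (hσinit : ∀ k : ℤ, k ≤ 0 → ∃ c : ℝ, 0 < c ∧ ∀ ω, σ k ω = c)
    (hσrec : ∀ n : ℤ, 1 ≤ n → n ≤ (T : ℤ) → ∀ ω,
        σ n ω ^ 2 = α0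
          + (∑ i ∈ Finset.Icc 1 q, α i * (ε (n - i) ω - γ i * σ (n - i) ω) ^ 2)
          + ∑ j ∈ Finset.Icc 1 p, β j * σ (n - j) ω ^ 2)
    (F : ℕ → MeasurableSpace Ω)
    (hF : ∀ n : ℕ, F n = ⨆ k ∈ Finset.Icc 1 n,
        MeasurableSpace.comap (ε (k : ℤ)) inferInstance)
    (s : ℕ → Ω → ℝ) (hs0 : ∃ c : ℝ, ∀ ω, s 0 ω = c)
    (hs : ∀ n : ℕ, 1 ≤ n → n ≤ T → ∀ ω,
        s n ω - s (n - 1) ω = lam * σ (n : ℤ) ω ^ 2 + σ (n : ℤ) ω * ε (n : ℤ) ω)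
    (S : ℕ → Ω → ℝ) (hS : ∀ n ω, S n ω = Real.exp (s n ω))
    (Q : Measure Ω)
    (hQ : Q = P.withDensity fun ω => ENNReal.ofReal
        (∏ k ∈ Finset.Icc 1 T, Real.exp
          (-((lam + 1 / 2) * σ (k : ℤ) ω * ε (k : ℤ) ω)
            - (lam + 1 / 2) ^ 2 * σ (k : ℤ) ω ^ 2 / 2))) :
    (iIndepFun
        (fun i : Fin T => fun ω =>
          ε ((i.val : ℤ) + 1) ω + (lam + 1 / 2) * σ ((i.val : ℤ) + 1) ω) Q
      ∧ ∀ k : ℤ, 1 ≤ k → k ≤ (T : ℤ) →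
          Measure.map (fun ω => ε k ω + (lam + 1 / 2) * σ k ω) Q = gaussianReal 0 1)
    ∧ (∀ n : ℕ, 1 ≤ n → n ≤ T → ∀ ω,
        (s n ω - s (n - 1) ω
            = -σ (n : ℤ) ω ^ 2 / 2
              + σ (n : ℤ) ω * (ε (n : ℤ) ω + (lam + 1 / 2) * σ (n : ℤ) ω))
        ∧ σ (n : ℤ) ω ^ 2
            = α0 + (∑ i ∈ Finset.Icc 1 q, α i *
                ((ε ((n : ℤ) - i) ω + (lam + 1 / 2) * σ ((n : ℤ) - i) ω)
                  - (lam + γ i + 1 / 2) * σ ((n : ℤ) - i) ω) ^ 2)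
              + ∑ j ∈ Finset.Icc 1 p, β j * σ ((n : ℤ) - j) ω ^ 2)
    ∧ ((∀ n, n ≤ T → Integrable (S n) Q)
        ∧ ∀ i j : ℕ, i ≤ j → j ≤ T → Q[S j | F i] =ᵐ[Q] S i) := by
  classical
  -- constants for nonpositive indices
  set εc : ℤ → ℝ := fun k => if h : k ≤ 0 then (hεinit k h).choose else 0 with hεcdef
  set σc : ℤ → ℝ := fun k => if h : k ≤ 0 then (hσinit k h).choose else 0 with hσcdef
  have hεc : ∀ (k : ℤ), k ≤ 0 → ∀ ω, ε k ω = εc k := by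
    intro k h ω
    rw [hεcdef]
    simp only [dif_pos h]
    exact (hεinit k h).choose_spec.2 ω
  have hσc : ∀ (k : ℤ), k ≤ 0 → ∀ ω, σ k ω = σc k := by
    intro k h ω
    rw [hσcdef]
    simp only [dif_pos h]
    exact (hσinit k h).choose_spec.2 ω
  set gz : ℤ → (ℕ → ℝ) → ℝ := hnGsZ α0 α β γ p q εc σc with hgzdef
  set path : Ω → ℕ → ℝ := fun ω j => ε (j : ℤ) ω with hpathdef
  set Yt : ℕ → Ω → ℕ → ℝ := fun m ω j => if 1 ≤ j ∧ j ≤ m then ε (j : ℤ) ω else 0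
    with hYtdef
  -- representation of σ as a measurable function of the path
  have hσrepN : ∀ N : ℕ, ∀ n : ℤ, n.toNat ≤ N → n ≤ (T : ℤ) → ∀ ω,
      σ n ω = gz n (path ω) := by
    intro N
    induction N with
    | zero =>
      intro n hn hnT ω
      have hn0 : n ≤ 0 := by omega
      rw [hgzdef, hnGsZ_nonpos hn0, ← hσc n hn0 ω]
    | succ N ihN =>
      intro n hn hnT ω
      by_cases hn0 : n ≤ 0
      · rw [hgzdef, hnGsZ_nonpos hn0, ← hσc n hn0 ω]
      · have hn1 : 1 ≤ n := by omega
        rw [hgzdef, hnGsZ_succ hn1, ← hgzdef]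
        have hsum1 : ∀ i ∈ Finset.Icc 1 q,
            α i * (hnEv εc (n - i) (path ω) - γ i * gz (n - i) (path ω)) ^ 2
              = α i * (ε (n - i) ω - γ i * σ (n - i) ω) ^ 2 := by
          intro i hi
          have hi1 : 1 ≤ i := (Finset.mem_Icc.mp hi).1
          have hgzi : gz (n - i) (path ω) = σ (n - i) ω :=
            (ihN (n - i) (by omega) (by omega) ω).symm
          have hev : hnEv εc (n - i) (path ω) = ε (n - i) ω := by
            unfold hnEv
            split_ifs with h
            · exact (hεc _ h ω).symm
            · rw [hpathdef]
              simp only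
              congr 1
              omega
          rw [hgzi, hev]
        have hsum2 : ∀ j ∈ Finset.Icc 1 p,
            β j * gz (n - j) (path ω) ^ 2 = β j * σ (n - j) ω ^ 2 := by
          intro j hj
          have hj1 : 1 ≤ j := (Finset.mem_Icc.mp hj).1
          rw [ihN (n - j) (by omega) (by omega) ω]
        rw [Finset.sum_congr rfl hsum1, Finset.sum_congr rfl hsum2,
          ← hσrec n hn1 hnT ω, Real.sqrt_sq (hσpos n ω).le]
  have hσrep : ∀ n : ℤ, n ≤ (T : ℤ) → ∀ ω, σ n ω = gz n (path ω) :=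
    fun n hn ω => hσrepN n.toNat n le_rfl hn ω
  -- σ in terms of truncated paths
  have hYtpath : ∀ (m : ℕ) (k : ℤ), k ≤ (m : ℤ) + 1 → ∀ ω,
      gz k (Yt m ω) = gz k (path ω) := by
    intro m k hk ω
    rw [hgzdef]
    apply hnGsZ_congr
    intro j hj1 hjk
    rw [hYtdef, hpathdef]
    simp only
    rw [if_pos ⟨hj1, by omega⟩]
  have hσY : ∀ (m : ℕ) (k : ℤ), k ≤ (m : ℤ) + 1 → k ≤ (T : ℤ) → ∀ ω,
      σ k ω = gz k (Yt m ω) := by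
    intro m k hk hkT ω
    rw [hσrep k hkT ω, hYtpath m k hk ω]
  have hεY : ∀ (m : ℕ) (k : ℕ), 1 ≤ k → k ≤ m → ∀ ω, ε (k : ℤ) ω = Yt m ω k := by
    intro m k h1 h2 ω
    rw [hYtdef]
    simp only
    rw [if_pos ⟨h1, h2⟩]
  -- measurability
  have hpathm : Measurable path := measurable_pi_lambda _ fun j => hεmeas _
  have hgzm : ∀ k : ℤ, Measurable (gz k) := by
    intro k; rw [hgzdef]; exact hnGsZ_measurable k
  have hσm : ∀ k : ℤ, k ≤ (T : ℤ) → Measurable (σ k) := by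
    intro k hk
    have : σ k = fun ω => gz k (path ω) := funext fun ω => hσrep k hk ω
    rw [this]
    exact (hgzm k).comp hpathm
  have hYtm0 : ∀ m : ℕ, Measurable (Yt m) := by
    intro m
    apply measurable_pi_lambda
    intro j
    rw [hYtdef]
    simp only
    split_ifs with h
    · exact hεmeas _
    · exact measurable_const
  have hYtm := hYtm0

  -- log-price telescope
  obtain ⟨c0, hc0⟩ := hs0
  have hstel : ∀ n : ℕ, n ≤ T → ∀ ω, s n ω = c0
      + ∑ k ∈ Finset.Icc 1 n, (lam * σ (k : ℤ) ω ^ 2 + σ (k : ℤ) ω * ε (k : ℤ) ω) := by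
    intro n
    induction n with
    | zero => intro _ ω; simp [hc0 ω]
    | succ n ih =>
      intro hn ω
      have h1 := hs (n+1) (by omega) hn ω
      simp only [Nat.add_sub_cancel] at h1
      have h2 := ih (by omega) ω
      rw [Finset.sum_Icc_succ_top (by omega : 1 ≤ n+1)]
      push_cast at h1 h2 ⊢
      linarith
  have hsmeas : ∀ n : ℕ, n ≤ T → Measurable (s n) := by
    intro n hn
    have hrw : s n = fun ω => c0
        + ∑ k ∈ Finset.Icc 1 n, (lam * σ (k : ℤ) ω ^ 2 + σ (k : ℤ) ω * ε (k : ℤ) ω) :=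
      funext (hstel n hn)
    rw [hrw]
    apply Measurable.add measurable_const
    apply Finset.measurable_sum
    intro k hk
    have hkT : (k : ℤ) ≤ (T : ℤ) := by
      have := (Finset.mem_Icc.mp hk).2; omega
    exact (measurable_const.mul ((hσm k hkT).pow_const 2)).add
      ((hσm k hkT).mul (hεmeas _))
  -- the conditioning step lemma
  have hstep : ∀ n : ℕ, 1 ≤ n → n ≤ T → ∀ Fu : (ℕ → ℝ) → ℝ → ℝ≥0∞,
      Measurable (Function.uncurry Fu) →
      ∫⁻ ω, Fu (Yt (n-1) ω) (ε (n : ℤ) ω) ∂P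
        = ∫⁻ ω, ∫⁻ x, Fu (Yt (n-1) ω) x ∂(gaussianReal 0 1) ∂P := by
    intro n hn1 hnT Fu hFu
    set m := n - 1 with hm
    have hin : n - 1 < T := by omega
    set Sfin : Finset (Fin T) := Finset.univ.filter (fun i => i.val + 1 ≤ m) with hSfin
    set i0 : Fin T := ⟨n - 1, hin⟩ with hi0
    have hdisj : Disjoint Sfin {i0} := by
      rw [Finset.disjoint_right]
      intro a ha hamem
      rw [Finset.mem_singleton] at ha
      rw [hSfin, Finset.mem_filter] at hamem
      have : a.val = n - 1 := by rw [ha, hi0]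
      omega
    have hind0 := hεindep.indepFun_finset Sfin {i0} hdisj (fun i => hεmeas _)
    set φ : ({x // x ∈ Sfin} → ℝ) → (ℕ → ℝ) := fun v j =>
      if h : 1 ≤ j ∧ j ≤ m then v ⟨⟨j - 1, by omega⟩, by
        rw [hSfin]
        simp only [Finset.mem_filter, Finset.mem_univ, true_and]
        omega⟩ else 0 with hφ
    set ψ : ({x // x ∈ ({i0} : Finset (Fin T))} → ℝ) → ℝ :=
      fun w => w ⟨i0, Finset.mem_singleton_self i0⟩ with hψ
    have hφm : Measurable φ := by
      apply measurable_pi_lambda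
      intro j
      rw [hφ]
      simp only
      split_ifs with h
      · exact measurable_pi_apply _
      · exact measurable_const
    have hψm : Measurable ψ := measurable_pi_apply _
    have hYX : IndepFun (Yt m) (ε (n : ℤ)) P := by
      have hcomp := hind0.comp hφm hψm
      have hl : φ ∘ (fun a (i : {x // x ∈ Sfin}) => ε ((i.val.val : ℤ) + 1) a)
          = Yt m := by
        funext a
        funext j
        rw [Function.comp_apply, hφ, hYtdef]
        simp only
        split_ifs with h
        · congr 1
          push_cast
          omega
        · rfl
      have hr : ψ ∘ (fun a (i : {x // x ∈ ({i0} : Finset (Fin T))}) =>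
          ε ((i.val.val : ℤ) + 1) a) = ε (n : ℤ) := by
        funext a
        rw [Function.comp_apply, hψ]
        simp only
        congr 1
        show ((i0.val : ℕ) : ℤ) + 1 = (n : ℤ)
        have hi0v : i0.val = n - 1 := rfl
        rw [hi0v]
        omega
      rw [hl, hr] at hcomp
      exact hcomp
    have hpm : Measurable (fun ω => (Yt m ω, ε (n : ℤ) ω)) :=
      (hYtm m).prodMk (hεmeas _)
    have hlaw : P.map (fun ω => (Yt m ω, ε (n : ℤ) ω))
        = (P.map (Yt m)).prod (gaussianReal 0 1) := by
      rw [← hεgauss n (by omega) (by omega)]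
      exact (indepFun_iff_map_prod_eq_prod_map_map (hYtm m).aemeasurable
        (hεmeas _).aemeasurable).mp hYX
    calc ∫⁻ ω, Fu (Yt m ω) (ε (n : ℤ) ω) ∂P
        = ∫⁻ z, Function.uncurry Fu z ∂(P.map (fun ω => (Yt m ω, ε (n : ℤ) ω))) := by
          rw [lintegral_map hFu hpm]
          rfl
      _ = ∫⁻ z, Function.uncurry Fu z ∂((P.map (Yt m)).prod (gaussianReal 0 1)) := by
          rw [hlaw]
      _ = ∫⁻ y, ∫⁻ x, Fu y x ∂(gaussianReal 0 1) ∂(P.map (Yt m)) :=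
          lintegral_prod _ hFu.aemeasurable
      _ = ∫⁻ ω, ∫⁻ x, Fu (Yt m ω) x ∂(gaussianReal 0 1) ∂P := by
          rw [lintegral_map (Measurable.lintegral_prod_right hFu) (hYtm m)]

  -- density factors
  set dk : ℕ → Ω → ℝ≥0∞ := fun k ω => ENNReal.ofReal (Real.exp
      (-((lam + 1/2) * σ (k : ℤ) ω * ε (k : ℤ) ω)
        - (lam + 1/2)^2 * σ (k : ℤ) ω ^ 2 / 2)) with hdk
  set df : ℕ → (ℕ → ℝ) → ℝ≥0∞ := fun k y => ENNReal.ofReal (Real.exp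
      (-((lam + 1/2) * gz (k : ℤ) y * y k)
        - (lam + 1/2)^2 * gz (k : ℤ) y ^ 2 / 2)) with hdf
  have hdfm : ∀ k : ℕ, Measurable (df k) := by
    intro k
    rw [hdf]
    exact ((((hgzm (k:ℤ)).const_mul (lam + 1/2)).mul (measurable_pi_apply k)).neg.sub
      ((((hgzm (k:ℤ)).pow_const 2).const_mul ((lam + 1/2)^2)).div_const 2)).exp.ennreal_ofReal
  have hdkY : ∀ (mlev k : ℕ), 1 ≤ k → k ≤ mlev → k ≤ T → ∀ ω,
      dk k ω = df k (Yt mlev ω) := by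
    intro mlev k h1 h2 h3 ω
    rw [hdk, hdf]
    simp only
    rw [← hσY mlev k (by omega) (by omega) ω, ← hεY mlev k h1 h2 ω]
  -- main independence computation
  have appA : ∀ n : ℕ, n ≤ T → ∀ g : ℕ → ℝ → ℝ≥0∞, (∀ k, Measurable (g k)) →
      ∫⁻ ω, ∏ k ∈ Finset.Icc 1 n,
          (dk k ω * g k (ε (k : ℤ) ω + (lam + 1/2) * σ (k : ℤ) ω)) ∂P
        = ∏ k ∈ Finset.Icc 1 n, ∫⁻ x, g k x ∂(gaussianReal 0 1) := by
    intro n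
    induction n with
    | zero => intro _ g _; simp
    | succ n ih =>
      intro hn g hg
      set v : (ℕ → ℝ) → ℝ := gz ((n+1 : ℕ) : ℤ) with hv
      have hvm : Measurable v := hgzm _
      set Gf : (ℕ → ℝ) → ℝ≥0∞ := fun y => ∏ k ∈ Finset.Icc 1 n,
        (df k y * g k (y k + (lam + 1/2) * gz (k : ℤ) y)) with hGf
      have hGfm : Measurable Gf := by
        rw [hGf]
        exact Finset.measurable_prod _ fun k _ => (hdfm k).mul
          ((hg k).comp ((measurable_pi_apply k).add ((hgzm (k:ℤ)).const_mul _)))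
      set Fu : (ℕ → ℝ) → ℝ → ℝ≥0∞ := fun y x => Gf y *
        (ENNReal.ofReal (Real.exp (-((lam + 1/2) * v y * x) - ((lam + 1/2) * v y)^2/2))
          * g (n+1) (x + (lam + 1/2) * v y)) with hFu
      have hFum : Measurable (Function.uncurry Fu) := by
        rw [hFu, Function.uncurry_def]
        apply Measurable.mul (hGfm.comp measurable_fst)
        apply Measurable.mul
        · exact ((((hvm.comp measurable_fst).const_mul (lam + 1/2)).mul
            measurable_snd).neg.sub
            ((((hvm.comp measurable_fst).const_mul (lam + 1/2)).pow_const 2).div_const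
              2)).exp.ennreal_ofReal
        · exact (hg (n+1)).comp
            (measurable_snd.add ((hvm.comp measurable_fst).const_mul _))
      have hGfY : ∀ ω, Gf (Yt n ω) = ∏ k ∈ Finset.Icc 1 n,
          (dk k ω * g k (ε (k : ℤ) ω + (lam + 1/2) * σ (k : ℤ) ω)) := by
        intro ω
        rw [hGf]
        refine Finset.prod_congr rfl fun k hk => ?_
        obtain ⟨hk1, hk2⟩ := Finset.mem_Icc.mp hk
        rw [← hdkY n k hk1 hk2 (by omega) ω, ← hεY n k hk1 hk2 ω,
          ← hσY n (k : ℤ) (by omega) (by omega) ω]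
      have hpoint : ∀ ω, ∏ k ∈ Finset.Icc 1 (n+1),
          (dk k ω * g k (ε (k : ℤ) ω + (lam + 1/2) * σ (k : ℤ) ω))
            = Fu (Yt n ω) (ε ((n+1 : ℕ) : ℤ) ω) := by
        intro ω
        rw [Finset.prod_Icc_succ_top (by omega : 1 ≤ n+1), hFu]
        simp only
        rw [hGfY ω]
        congr 1
        have hσn : σ ((n+1 : ℕ) : ℤ) ω = v (Yt n ω) := by
          rw [hv]
          exact hσY n ((n+1 : ℕ) : ℤ) (by push_cast; omega) (by omega) ω
        rw [hdk]
        simp only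
        rw [hσn]
        congr 2
        ring
      calc ∫⁻ ω, ∏ k ∈ Finset.Icc 1 (n+1),
            (dk k ω * g k (ε (k : ℤ) ω + (lam + 1/2) * σ (k : ℤ) ω)) ∂P
          = ∫⁻ ω, Fu (Yt n ω) (ε ((n+1 : ℕ) : ℤ) ω) ∂P := lintegral_congr hpoint
        _ = ∫⁻ ω, ∫⁻ x, Fu (Yt n ω) x ∂(gaussianReal 0 1) ∂P := by
            have := hstep (n+1) (by omega) hn Fu hFum
            simpa using this
        _ = ∫⁻ ω, Gf (Yt n ω) * ∫⁻ x, g (n+1) x ∂(gaussianReal 0 1) ∂P := by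
            apply lintegral_congr
            intro ω
            rw [hFu]
            simp only
            rw [lintegral_const_mul _ (by
              exact ((((measurable_const).mul measurable_id).neg.sub
                measurable_const).exp.ennreal_ofReal).mul
                ((hg (n+1)).comp (measurable_id.add_const _)))]
            congr 1
            exact hn_gauss_shift ((lam + 1/2) * v (Yt n ω)) (g (n+1)) (hg (n+1))
        _ = (∫⁻ ω, Gf (Yt n ω) ∂P) * ∫⁻ x, g (n+1) x ∂(gaussianReal 0 1) :=
            lintegral_mul_const _ (hGfm.comp (hYtm n))
        _ = (∏ k ∈ Finset.Icc 1 n, ∫⁻ x, g k x ∂(gaussianReal 0 1))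
              * ∫⁻ x, g (n+1) x ∂(gaussianReal 0 1) := by
            rw [← ih (by omega) g hg]
            congr 1
            exact lintegral_congr hGfY
        _ = ∏ k ∈ Finset.Icc 1 (n+1), ∫⁻ x, g k x ∂(gaussianReal 0 1) :=
            (Finset.prod_Icc_succ_top (by omega : 1 ≤ n+1) _).symm

  have hdkm : ∀ k : ℕ, k ≤ T → Measurable (dk k) := by
    intro k hk
    rw [hdk]
    have hkT : (k : ℤ) ≤ (T : ℤ) := by omega
    exact ((((hσm k hkT).const_mul (lam + 1/2)).mul (hεmeas _)).neg.sub
      ((((hσm k hkT).pow_const 2).const_mul ((lam + 1/2)^2)).div_const 2)).exp.ennreal_ofReal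
  have hDm : Measurable (fun ω => ∏ k ∈ Finset.Icc 1 T, dk k ω) :=
    Finset.measurable_prod _ fun k hk => hdkm k (Finset.mem_Icc.mp hk).2
  have hQD : Q = P.withDensity (fun ω => ∏ k ∈ Finset.Icc 1 T, dk k ω) := by
    rw [hQ]
    congr 1
    funext ω
    rw [ENNReal.ofReal_prod_of_nonneg (fun i _ => Real.exp_nonneg _)]
  have hQapp : ∀ A : Set Ω, MeasurableSet A →
      Q A = ∫⁻ ω, (∏ k ∈ Finset.Icc 1 T, dk k ω) * A.indicator 1 ω ∂P := by
    intro A hA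
    rw [hQD, withDensity_apply _ hA, ← lintegral_indicator hA]
    apply lintegral_congr
    intro ω
    by_cases h : ω ∈ A
    · rw [Set.indicator_of_mem h, Set.indicator_of_mem h, Pi.one_apply, mul_one]
    · rw [Set.indicator_of_notMem h, Set.indicator_of_notMem h, mul_zero]
  have hetm : ∀ k : ℤ, k ≤ (T : ℤ) →
      Measurable (fun ω => ε k ω + (lam + 1/2) * σ k ω) := by
    intro k hk
    exact (hεmeas k).add ((hσm k hk).const_mul _)
  have hindprod : ∀ (sfin : Finset ℕ) (A : ℕ → Set ℝ) (f : ℕ → Ω → ℝ) (ω : Ω),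
      ∏ k ∈ sfin, (A k).indicator (1 : ℝ → ℝ≥0∞) (f k ω)
        = (⋂ k ∈ sfin, f k ⁻¹' A k).indicator (1 : Ω → ℝ≥0∞) ω := by
    intro sfin A f ω
    by_cases h : ω ∈ ⋂ k ∈ sfin, f k ⁻¹' A k
    · rw [Set.indicator_of_mem h, Pi.one_apply]
      apply Finset.prod_eq_one
      intro k hk
      have hmem : f k ω ∈ A k := by
        simp only [Set.mem_iInter] at h
        exact h k hk
      rw [Set.indicator_of_mem hmem, Pi.one_apply]
    · rw [Set.indicator_of_notMem h]
      simp only [Set.mem_iInter, not_forall] at h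
      obtain ⟨k, hk, hnot⟩ := h
      have hnot' : f k ω ∉ A k := hnot
      exact Finset.prod_eq_zero hk (by rw [Set.indicator_of_notMem hnot'])
  have hQinter : ∀ (sfin : Finset ℕ), (∀ k ∈ sfin, 1 ≤ k ∧ k ≤ T) →
      ∀ (A : ℕ → Set ℝ), (∀ k, MeasurableSet (A k)) →
      Q (⋂ k ∈ sfin, (fun ω => ε (k : ℤ) ω + (lam + 1/2) * σ (k : ℤ) ω) ⁻¹' A k)
        = ∏ k ∈ sfin, (gaussianReal 0 1) (A k) := by
    intro sfin hsub A hA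
    have hsub' : sfin ⊆ Finset.Icc 1 T := fun k hk =>
      Finset.mem_Icc.mpr (hsub k hk)
    set g : ℕ → ℝ → ℝ≥0∞ := fun k =>
      if k ∈ sfin then (A k).indicator (1 : ℝ → ℝ≥0∞) else fun _ => 1 with hg
    have hgm : ∀ k, Measurable (g k) := by
      intro k
      simp only [hg]
      split_ifs with h
      · exact measurable_const.indicator (hA k)
      · exact measurable_const
    have hinter_meas : MeasurableSet
        (⋂ k ∈ sfin, (fun ω => ε (k : ℤ) ω + (lam + 1/2) * σ (k : ℤ) ω) ⁻¹' A k) := by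
      apply MeasurableSet.biInter (Set.to_countable _)
      intro k hk
      have hkT : (k : ℤ) ≤ (T : ℤ) := by
        have := (hsub k hk).2; omega
      exact (hetm k hkT) (hA k)
    rw [hQapp _ hinter_meas]
    have hpoint : ∀ ω, (∏ k ∈ Finset.Icc 1 T, dk k ω)
        * (⋂ k ∈ sfin, (fun ω => ε (k : ℤ) ω + (lam + 1/2) * σ (k : ℤ) ω) ⁻¹' A k).indicator
            (1 : Ω → ℝ≥0∞) ω
        = ∏ k ∈ Finset.Icc 1 T,
            (dk k ω * g k (ε (k : ℤ) ω + (lam + 1/2) * σ (k : ℤ) ω)) := by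
      intro ω
      rw [Finset.prod_mul_distrib]
      congr 1
      rw [← hindprod sfin A (fun k ω => ε (k : ℤ) ω + (lam + 1/2) * σ (k : ℤ) ω) ω]
      rw [show ∀ K : Finset ℕ, ∏ k ∈ K, g k (ε (k : ℤ) ω + (lam + 1/2) * σ (k : ℤ) ω)
          = ∏ k ∈ K, (if k ∈ sfin then
              (A k).indicator (1 : ℝ → ℝ≥0∞) (ε (k : ℤ) ω + (lam + 1/2) * σ (k : ℤ) ω)
            else 1) from fun K => Finset.prod_congr rfl fun k _ => by
        simp only [hg]; split_ifs with h <;> rfl]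
      rw [Finset.prod_ite_mem (Finset.Icc 1 T) sfin, Finset.inter_eq_right.mpr hsub']
    rw [lintegral_congr hpoint, appA T le_rfl g hgm]
    calc ∏ k ∈ Finset.Icc 1 T, ∫⁻ x, g k x ∂(gaussianReal 0 1)
        = ∏ k ∈ Finset.Icc 1 T, (if k ∈ sfin then (gaussianReal 0 1) (A k) else 1) := by
          refine Finset.prod_congr rfl fun k _ => ?_
          simp only [hg]
          split_ifs with h
          · exact lintegral_indicator_one (hA k)
          · simp
      _ = ∏ k ∈ sfin, (gaussianReal 0 1) (A k) := by
          rw [Finset.prod_ite_mem (Finset.Icc 1 T) sfin, Finset.inter_eq_right.mpr hsub']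
  have hQprob : IsProbabilityMeasure Q := by
    constructor
    have h0 := hQinter ∅ (by simp) (fun _ => Set.univ) (fun _ => MeasurableSet.univ)
    simpa using h0
  -- conclusion (a), second half
  have hmap : ∀ k : ℤ, 1 ≤ k → k ≤ (T : ℤ) →
      Measure.map (fun ω => ε k ω + (lam + 1 / 2) * σ k ω) Q = gaussianReal 0 1 := by
    intro k hk1 hk2
    ext B hB
    rw [Measure.map_apply (hetm k hk2) hB]
    have hknat : ((k.toNat : ℕ) : ℤ) = k := by omega
    have h := hQinter {k.toNat} (by
        intro j hj
        rw [Finset.mem_singleton] at hj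
        subst hj
        omega) (fun _ => B) (fun _ => hB)
    simp only [Finset.mem_singleton, Set.iInter_iInter_eq_left, Finset.prod_singleton,
      hknat] at h
    exact h
  -- conclusion (a), first half
  have hiid : iIndepFun
      (fun i : Fin T => fun ω =>
        ε ((i.val : ℤ) + 1) ω + (lam + 1 / 2) * σ ((i.val : ℤ) + 1) ω) Q := by
    rw [iIndepFun_iff_measure_inter_preimage_eq_mul]
    intro Sf sets hsets
    set A : ℕ → Set ℝ := fun k =>
      if h : k - 1 < T ∧ (1 ≤ k) then
        (if (⟨k - 1, h.1⟩ : Fin T) ∈ Sf then sets ⟨k - 1, h.1⟩ else Set.univ)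
      else Set.univ with hAdef
    have hAm : ∀ k, MeasurableSet (A k) := by
      intro k
      simp only [hAdef]
      split_ifs with h h2
      · exact hsets _ h2
      · exact MeasurableSet.univ
      · exact MeasurableSet.univ
    set sfin : Finset ℕ := Sf.image (fun i : Fin T => i.val + 1) with hsfin
    have hmem : ∀ k ∈ sfin, 1 ≤ k ∧ k ≤ T := by
      intro k hk
      rw [hsfin, Finset.mem_image] at hk
      obtain ⟨i, _, hik⟩ := hk
      omega
    have h := hQinter sfin hmem A hAm
    have hsetseq : ∀ i : Fin T, i ∈ Sf → A (i.val + 1) = sets i := by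
      intro i hi
      simp only [hAdef]
      have h1 : i.val + 1 - 1 < T ∧ 1 ≤ i.val + 1 := by
        exact ⟨by simpa using i.isLt, by omega⟩
      rw [dif_pos h1]
      have h2 : (⟨i.val + 1 - 1, h1.1⟩ : Fin T) = i := by
        apply Fin.ext
        simp
      rw [h2, if_pos hi]
    have hseteq : (⋂ k ∈ sfin,
        (fun ω => ε (k : ℤ) ω + (lam + 1/2) * σ (k : ℤ) ω) ⁻¹' A k)
        = ⋂ i ∈ Sf, (fun ω =>
            ε ((i.val : ℤ) + 1) ω + (lam + 1 / 2) * σ ((i.val : ℤ) + 1) ω) ⁻¹' sets i := by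
      rw [hsfin]
      rw [Finset.set_biInter_finset_image]
      apply Set.iInter₂_congr
      intro i hi
      rw [hsetseq i hi]
      congr 1 <;> push_cast <;> rfl
    rw [hseteq] at h
    rw [h]
    have hprodeq : ∏ k ∈ sfin, (gaussianReal 0 1) (A k)
        = ∏ i ∈ Sf, (gaussianReal 0 1) (sets i) := by
      rw [hsfin, Finset.prod_image (by
        intro a _ b _ hab
        apply Fin.ext
        simp only at hab
        omega)]
      exact Finset.prod_congr rfl fun i hi => by rw [hsetseq i hi]
    rw [hprodeq]
    refine Finset.prod_congr rfl fun i hi => ?_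
    have hsingle := hQinter {i.val + 1} (by
        intro j hj
        rw [Finset.mem_singleton] at hj
        subst hj
        exact ⟨by omega, by have := i.isLt; omega⟩) A hAm
    simp only [Finset.mem_singleton, Set.iInter_iInter_eq_left,
      Finset.prod_singleton] at hsingle
    rw [hsetseq i hi] at hsingle
    rw [show (fun ω => ε ((i.val : ℤ) + 1) ω + (lam + 1 / 2) * σ ((i.val : ℤ) + 1) ω)
        = (fun ω => ε (((i.val + 1 : ℕ) : ℤ)) ω
            + (lam + 1/2) * σ (((i.val + 1 : ℕ) : ℤ)) ω) from by
      push_cast; rfl]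
    rw [hsingle]
  -- conclusion (b)
  have hpartb : ∀ n : ℕ, 1 ≤ n → n ≤ T → ∀ ω,
      (s n ω - s (n - 1) ω
          = -σ (n : ℤ) ω ^ 2 / 2
            + σ (n : ℤ) ω * (ε (n : ℤ) ω + (lam + 1 / 2) * σ (n : ℤ) ω))
      ∧ σ (n : ℤ) ω ^ 2
          = α0 + (∑ i ∈ Finset.Icc 1 q, α i *
              ((ε ((n : ℤ) - i) ω + (lam + 1 / 2) * σ ((n : ℤ) - i) ω)
                - (lam + γ i + 1 / 2) * σ ((n : ℤ) - i) ω) ^ 2)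
            + ∑ j ∈ Finset.Icc 1 p, β j * σ ((n : ℤ) - j) ω ^ 2 := by
    intro n h1 h2 ω
    constructor
    · rw [hs n h1 h2 ω]
      ring
    · rw [hσrec n (by omega) (by omega) ω]
      congr 2
      refine Finset.sum_congr rfl fun i _ => ?_
      congr 1
      ring

  -- filtration as comap of truncated paths
  have hFle : ∀ i : ℕ, F i ≤ m0 := by
    intro i
    rw [hF i]
    exact iSup₂_le fun k _ => (hεmeas (k : ℤ)).comap_le
  have hFcomap : ∀ i : ℕ, F i = MeasurableSpace.comap (Yt i) MeasurableSpace.pi := by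
    intro i
    rw [hF i]
    apply le_antisymm
    · refine iSup₂_le fun k hk => ?_
      obtain ⟨hk1, hk2⟩ := Finset.mem_Icc.mp hk
      have heq : ε (k : ℤ) = (fun y : ℕ → ℝ => y k) ∘ Yt i := by
        funext ω
        rw [Function.comp_apply]
        exact hεY i k hk1 hk2 ω
      rw [heq, ← MeasurableSpace.comap_comp]
      exact MeasurableSpace.comap_mono (measurable_pi_apply k).comap_le
    · have hpi : (MeasurableSpace.pi : MeasurableSpace (ℕ → ℝ))
          = ⨆ l : ℕ, MeasurableSpace.comap (fun y : ℕ → ℝ => y l) inferInstance := rfl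
      rw [hpi, MeasurableSpace.comap_iSup]
      refine iSup_le fun l => ?_
      rw [MeasurableSpace.comap_comp]
      by_cases h : 1 ≤ l ∧ l ≤ i
      · have heq : ((fun y : ℕ → ℝ => y l) ∘ Yt i) = ε (l : ℤ) := funext fun ω => by
          rw [Function.comp_apply, hYtdef]
          simp only
          rw [if_pos h]
        rw [heq]
        exact le_iSup₂ (f := fun (k : ℕ) (_ : k ∈ Finset.Icc 1 i) =>
          MeasurableSpace.comap (ε (k : ℤ)) inferInstance) l (Finset.mem_Icc.mpr h)
      · have heq : ((fun y : ℕ → ℝ => y l) ∘ Yt i) = fun _ => (0 : ℝ) := funext fun ω => by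
          rw [Function.comp_apply, hYtdef]
          simp only
          rw [if_neg h]
        rw [heq, MeasurableSpace.comap_const]
        exact bot_le
  -- log-price as a function of the truncated path
  set sf : ℕ → (ℕ → ℝ) → ℝ := fun n y => c0
    + ∑ k ∈ Finset.Icc 1 n, (lam * gz (k : ℤ) y ^ 2 + gz (k : ℤ) y * y k) with hsf
  have hsfm : ∀ n : ℕ, Measurable (sf n) := by
    intro n
    rw [hsf]
    apply Measurable.add measurable_const
    apply Finset.measurable_sum
    intro k _
    exact (((hgzm (k:ℤ)).pow_const 2).const_mul lam).add
      ((hgzm (k:ℤ)).mul (measurable_pi_apply k))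
  have hsfY : ∀ (mlev n : ℕ), n ≤ mlev → n ≤ T → ∀ ω, s n ω = sf n (Yt mlev ω) := by
    intro mlev n h1 h2 ω
    rw [hstel n h2 ω, hsf]
    simp only
    congr 1
    refine Finset.sum_congr rfl fun k hk => ?_
    obtain ⟨hk1, hk2⟩ := Finset.mem_Icc.mp hk
    rw [← hσY mlev (k : ℤ) (by omega) (by omega) ω, ← hεY mlev k hk1 (by omega) ω]
  -- truncation
  set tr : ℕ → (ℕ → ℝ) → (ℕ → ℝ) := fun i y l => if 1 ≤ l ∧ l ≤ i then y l else 0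
    with htr
  have htrm : ∀ i : ℕ, Measurable (tr i) := by
    intro i
    apply measurable_pi_lambda
    intro l
    rw [htr]
    simp only
    split_ifs with h
    · exact measurable_pi_apply l
    · exact measurable_const
  have htrY : ∀ (i n : ℕ), i ≤ n → ∀ ω, tr i (Yt n ω) = Yt i ω := by
    intro i n hin ω
    funext l
    rw [htr, hYtdef]
    simp only
    by_cases h : 1 ≤ l ∧ l ≤ i
    · rw [if_pos h, if_pos ⟨h.1, by omega⟩, if_pos h]
    · rw [if_neg h, if_neg h]
  -- merging exponentials
  have hoRmul : ∀ a b : ℝ, ENNReal.ofReal (Real.exp a) * ENNReal.ofReal (Real.exp b)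
      = ENNReal.ofReal (Real.exp (a + b)) := by
    intro a b
    rw [← ENNReal.ofReal_mul (Real.exp_nonneg a), ← Real.exp_add]
  -- pointwise identification for part (c)
  have hGcpoint : ∀ (i r n : ℕ), i ≤ n → r ≤ n → r ≤ T → n ≤ T →
      ∀ (B : Set (ℕ → ℝ)) (ω : Ω),
      B.indicator (1 : (ℕ → ℝ) → ℝ≥0∞) (tr i (Yt n ω))
          * ENNReal.ofReal (Real.exp (sf r (Yt n ω)))
          * ∏ k ∈ Finset.Icc 1 n, df k (Yt n ω)
        = B.indicator (1 : (ℕ → ℝ) → ℝ≥0∞) (Yt i ω)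
          * ENNReal.ofReal (Real.exp (s r ω))
          * ∏ k ∈ Finset.Icc 1 n, dk k ω := by
    intro i r n hin hrn hrT hnT B ω
    rw [htrY i n hin ω, ← hsfY n r hrn hrT ω]
    congr 1
    refine Finset.prod_congr rfl fun k hk => ?_
    obtain ⟨hk1, hk2⟩ := Finset.mem_Icc.mp hk
    exact (hdkY n k hk1 hk2 (by omega) ω).symm
  -- the martingale computation
  have appC : ∀ (i j : ℕ), i ≤ j → j ≤ T → ∀ B : Set (ℕ → ℝ), MeasurableSet B →
      ∀ n : ℕ, i ≤ n → n ≤ T →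
      ∫⁻ ω, Set.indicator B (1 : (ℕ → ℝ) → ℝ≥0∞) (Yt i ω)
          * ENNReal.ofReal (Real.exp (s (min n j) ω)) * ∏ k ∈ Finset.Icc 1 n, dk k ω ∂P
        = ∫⁻ ω, Set.indicator B (1 : (ℕ → ℝ) → ℝ≥0∞) (Yt i ω)
          * ENNReal.ofReal (Real.exp (s i ω)) * ∏ k ∈ Finset.Icc 1 i, dk k ω ∂P := by
    intro i j hij hjT B hB n hn
    induction n, hn using Nat.le_induction with
    | base =>
      intro _
      rw [min_eq_left hij]
    | succ n hn ih =>
      intro hT1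
      have hnT : n ≤ T := by omega
      rw [← ih hnT]
      set v : (ℕ → ℝ) → ℝ := gz ((n+1 : ℕ) : ℤ) with hv
      have hvm : Measurable v := hgzm _
      set Gc : (ℕ → ℝ) → ℝ≥0∞ := fun y =>
        Set.indicator B (1 : (ℕ → ℝ) → ℝ≥0∞) (tr i y)
          * ENNReal.ofReal (Real.exp (sf (min n j) y))
          * ∏ k ∈ Finset.Icc 1 n, df k y with hGc
      have hGcm : Measurable Gc := by
        rw [hGc]
        exact (((measurable_const.indicator hB).comp (htrm i)).mul
          ((Real.measurable_exp.comp (hsfm (min n j))).ennreal_ofReal)).mul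
          (Finset.measurable_prod _ fun k _ => hdfm k)
      set Fu : (ℕ → ℝ) → ℝ → ℝ≥0∞ := fun y x => Gc y *
        (ENNReal.ofReal (Real.exp (-((lam + 1/2) * v y * x) - ((lam + 1/2) * v y)^2/2))
          * (if n+1 ≤ j then ENNReal.ofReal (Real.exp (lam * v y ^ 2 + v y * x)) else 1))
        with hFu
      have hFum : Measurable (Function.uncurry Fu) := by
        rw [hFu, Function.uncurry_def]
        apply Measurable.mul (hGcm.comp measurable_fst)
        apply Measurable.mul
        · exact ((((hvm.comp measurable_fst).const_mul (lam + 1/2)).mul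
            measurable_snd).neg.sub
            ((((hvm.comp measurable_fst).const_mul (lam + 1/2)).pow_const 2).div_const
              2)).exp.ennreal_ofReal
        · split_ifs with h
          · exact ((((hvm.comp measurable_fst).pow_const 2).const_mul lam).add
              ((hvm.comp measurable_fst).mul measurable_snd)).exp.ennreal_ofReal
          · exact measurable_const
      have hσv : ∀ ω, σ ((n+1 : ℕ) : ℤ) ω = v (Yt n ω) := by
        intro ω
        rw [hv]
        exact hσY n ((n+1 : ℕ) : ℤ) (by push_cast; omega) (by omega) ω
      have hpoint : ∀ ω,
          Set.indicator B (1 : (ℕ → ℝ) → ℝ≥0∞) (Yt i ω)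
            * ENNReal.ofReal (Real.exp (s (min (n+1) j) ω))
            * ∏ k ∈ Finset.Icc 1 (n+1), dk k ω
          = Fu (Yt n ω) (ε ((n+1 : ℕ) : ℤ) ω) := by
        intro ω
        rw [Finset.prod_Icc_succ_top (by omega : 1 ≤ n+1), hFu]
        simp only
        rw [hGc]
        simp only
        rw [hGcpoint i (min n j) n hn (min_le_left n j) (by omega) hnT B ω,
          ← hσv ω]
        have hbase : ENNReal.ofReal (Real.exp (s (min (n+1) j) ω)) * dk (n+1) ω
            = ENNReal.ofReal (Real.exp (s (min n j) ω)) *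
              (ENNReal.ofReal (Real.exp
                  (-((lam + 1/2) * σ ((n+1 : ℕ) : ℤ) ω * ε ((n+1 : ℕ) : ℤ) ω)
                    - ((lam + 1/2) * σ ((n+1 : ℕ) : ℤ) ω)^2/2))
                * (if n+1 ≤ j then ENNReal.ofReal (Real.exp
                    (lam * σ ((n+1 : ℕ) : ℤ) ω ^ 2
                      + σ ((n+1 : ℕ) : ℤ) ω * ε ((n+1 : ℕ) : ℤ) ω)) else 1)) := by
          rw [hdk]
          simp only
          by_cases hc : n+1 ≤ j
          · rw [if_pos hc]
            have hsp := hs (n+1) (by omega) (by omega) ω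
            simp only [Nat.add_sub_cancel] at hsp
            have hmin1 : min (n+1) j = n+1 := min_eq_left hc
            have hmin2 : min n j = n := min_eq_left (by omega)
            rw [hmin1, hmin2, hoRmul, hoRmul, hoRmul]
            congr 1
            have hsnew : s (n+1) ω = s n ω
                + (lam * σ ((n+1 : ℕ) : ℤ) ω ^ 2
                  + σ ((n+1 : ℕ) : ℤ) ω * ε ((n+1 : ℕ) : ℤ) ω) := by
              push_cast at hsp ⊢
              linarith
            rw [hsnew]
            ring
          · rw [if_neg hc, mul_one]
            have hmin1 : min (n+1) j = j := min_eq_right (by omega)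
            have hmin2 : min n j = j := min_eq_right (by omega)
            rw [hmin1, hmin2, hoRmul, hoRmul]
            congr 2
            ring
        calc Set.indicator B (1 : (ℕ → ℝ) → ℝ≥0∞) (Yt i ω)
              * ENNReal.ofReal (Real.exp (s (min (n+1) j) ω))
              * ((∏ k ∈ Finset.Icc 1 n, dk k ω) * dk (n+1) ω)
            = Set.indicator B (1 : (ℕ → ℝ) → ℝ≥0∞) (Yt i ω)
              * (ENNReal.ofReal (Real.exp (s (min (n+1) j) ω)) * dk (n+1) ω)
              * ∏ k ∈ Finset.Icc 1 n, dk k ω := by ring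
          _ = Set.indicator B (1 : (ℕ → ℝ) → ℝ≥0∞) (Yt i ω)
              * (ENNReal.ofReal (Real.exp (s (min n j) ω)) *
                (ENNReal.ofReal (Real.exp
                    (-((lam + 1/2) * σ ((n+1 : ℕ) : ℤ) ω * ε ((n+1 : ℕ) : ℤ) ω)
                      - ((lam + 1/2) * σ ((n+1 : ℕ) : ℤ) ω)^2/2))
                  * (if n+1 ≤ j then ENNReal.ofReal (Real.exp
                      (lam * σ ((n+1 : ℕ) : ℤ) ω ^ 2
                        + σ ((n+1 : ℕ) : ℤ) ω * ε ((n+1 : ℕ) : ℤ) ω)) else 1)))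
              * ∏ k ∈ Finset.Icc 1 n, dk k ω := by rw [hbase]
          _ = Set.indicator B (1 : (ℕ → ℝ) → ℝ≥0∞) (Yt i ω)
              * ENNReal.ofReal (Real.exp (s (min n j) ω))
              * (∏ k ∈ Finset.Icc 1 n, dk k ω)
              * (ENNReal.ofReal (Real.exp
                  (-((lam + 1/2) * σ ((n+1 : ℕ) : ℤ) ω * ε ((n+1 : ℕ) : ℤ) ω)
                    - ((lam + 1/2) * σ ((n+1 : ℕ) : ℤ) ω)^2/2))
                * (if n+1 ≤ j then ENNReal.ofReal (Real.exp
                    (lam * σ ((n+1 : ℕ) : ℤ) ω ^ 2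
                      + σ ((n+1 : ℕ) : ℤ) ω * ε ((n+1 : ℕ) : ℤ) ω)) else 1)) := by
              ring
      calc ∫⁻ ω, Set.indicator B (1 : (ℕ → ℝ) → ℝ≥0∞) (Yt i ω)
            * ENNReal.ofReal (Real.exp (s (min (n+1) j) ω))
            * ∏ k ∈ Finset.Icc 1 (n+1), dk k ω ∂P
          = ∫⁻ ω, Fu (Yt n ω) (ε ((n+1 : ℕ) : ℤ) ω) ∂P := lintegral_congr hpoint
        _ = ∫⁻ ω, ∫⁻ x, Fu (Yt n ω) x ∂(gaussianReal 0 1) ∂P := by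
            have := hstep (n+1) (by omega) hT1 Fu hFum
            simpa using this
        _ = ∫⁻ ω, Gc (Yt n ω) ∂P := by
            apply lintegral_congr
            intro ω
            rw [hFu]
            simp only
            rw [lintegral_const_mul _ (by
              apply Measurable.mul
              · exact (((measurable_const.mul measurable_id).neg.sub
                  measurable_const).exp.ennreal_ofReal)
              · split_ifs with h
                · exact (measurable_const.add
                    (measurable_id.const_mul _)).exp.ennreal_ofReal
                · exact measurable_const)]
            have hinner : ∫⁻ x,
                (ENNReal.ofReal (Real.exp (-((lam + 1/2) * v (Yt n ω) * x)
                    - ((lam + 1/2) * v (Yt n ω))^2/2))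
                  * (if n+1 ≤ j then ENNReal.ofReal (Real.exp
                      (lam * v (Yt n ω) ^ 2 + v (Yt n ω) * x)) else 1))
                ∂(gaussianReal 0 1) = 1 := by
              by_cases hc : n+1 ≤ j
              · rw [show (fun x => ENNReal.ofReal (Real.exp (-((lam + 1/2) * v (Yt n ω) * x)
                      - ((lam + 1/2) * v (Yt n ω))^2/2))
                    * (if n+1 ≤ j then ENNReal.ofReal (Real.exp
                        (lam * v (Yt n ω) ^ 2 + v (Yt n ω) * x)) else 1))
                    = fun x => ENNReal.ofReal (Real.exp
                      (((1 - (lam + 1/2)) * v (Yt n ω)) * x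
                        + (lam * v (Yt n ω) ^ 2
                          - ((lam + 1/2) * v (Yt n ω))^2/2))) from funext fun x => by
                  rw [if_pos hc, hoRmul]
                  congr 1
                  ring]
                rw [hn_gauss_exp]
                rw [show ((1 - (lam + 1/2)) * v (Yt n ω))^2/2
                    + (lam * v (Yt n ω) ^ 2 - ((lam + 1/2) * v (Yt n ω))^2/2) = 0 from
                  by ring]
                simp
              · rw [show (fun x => ENNReal.ofReal (Real.exp (-((lam + 1/2) * v (Yt n ω) * x)
                      - ((lam + 1/2) * v (Yt n ω))^2/2))
                    * (if n+1 ≤ j then ENNReal.ofReal (Real.exp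
                        (lam * v (Yt n ω) ^ 2 + v (Yt n ω) * x)) else 1))
                    = fun x => ENNReal.ofReal (Real.exp
                      ((-((lam + 1/2) * v (Yt n ω))) * x
                        + (-(((lam + 1/2) * v (Yt n ω))^2/2)))) from funext fun x => by
                  rw [if_neg hc, mul_one]
                  congr 1
                  ring]
                rw [hn_gauss_exp]
                rw [show (-((lam + 1/2) * v (Yt n ω)))^2/2
                    + (-(((lam + 1/2) * v (Yt n ω))^2/2)) = 0 from by ring]
                simp
            rw [hinner, mul_one]
        _ = ∫⁻ ω, Set.indicator B (1 : (ℕ → ℝ) → ℝ≥0∞) (Yt i ω)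
            * ENNReal.ofReal (Real.exp (s (min n j) ω))
            * ∏ k ∈ Finset.Icc 1 n, dk k ω ∂P := by
            apply lintegral_congr
            intro ω
            rw [hGc]
            simp only
            exact hGcpoint i (min n j) n hn (min_le_left n j) (by omega) hnT B ω
  -- measurability of prices
  have hSmeas : ∀ r : ℕ, r ≤ T → Measurable (S r) := by
    intro r hr
    have hrw : S r = fun ω => Real.exp (s r ω) := funext fun ω => hS r ω
    rw [hrw]
    exact Real.measurable_exp.comp (hsmeas r hr)
  -- set-integral identities under Q
  have hkey : ∀ (i r : ℕ), i ≤ r → r ≤ T → ∀ B : Set (ℕ → ℝ), MeasurableSet B →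
      ∫⁻ ω in (Yt i ⁻¹' B), ENNReal.ofReal (S r ω) ∂Q
        = ∫⁻ ω, Set.indicator B (1 : (ℕ → ℝ) → ℝ≥0∞) (Yt i ω)
            * ENNReal.ofReal (Real.exp (s i ω)) * ∏ k ∈ Finset.Icc 1 i, dk k ω ∂P := by
    intro i r hir hrT B hB
    have hAmeas : MeasurableSet (Yt i ⁻¹' B) := hYtm i hB
    rw [hQD, restrict_withDensity hAmeas,
      lintegral_withDensity_eq_lintegral_mul _ hDm ((hSmeas r hrT).ennreal_ofReal),
      ← lintegral_indicator hAmeas]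
    have hpt : ∀ ω, (Yt i ⁻¹' B).indicator
        ((fun ω => ∏ k ∈ Finset.Icc 1 T, dk k ω)
          * fun ω => ENNReal.ofReal (S r ω)) ω
        = Set.indicator B (1 : (ℕ → ℝ) → ℝ≥0∞) (Yt i ω)
            * ENNReal.ofReal (Real.exp (s (min T r) ω))
            * ∏ k ∈ Finset.Icc 1 T, dk k ω := by
      intro ω
      rw [min_eq_right hrT]
      by_cases h : ω ∈ Yt i ⁻¹' B
      · have h' : Yt i ω ∈ B := h
        rw [Set.indicator_of_mem h, Set.indicator_of_mem h', Pi.mul_apply, Pi.one_apply,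
          one_mul, hS r ω]
        ring
      · have h' : Yt i ω ∉ B := h
        rw [Set.indicator_of_notMem h, Set.indicator_of_notMem h', zero_mul, zero_mul]
    rw [lintegral_congr hpt]
    exact appC i r hir hrT B hB T (by omega) le_rfl
  have hlint : ∀ r : ℕ, r ≤ T → ∫⁻ ω, ENNReal.ofReal (S r ω) ∂Q
      = ENNReal.ofReal (Real.exp c0) := by
    intro r hr
    have h := hkey 0 r (by omega) hr Set.univ MeasurableSet.univ
    simp only [Set.preimage_univ, Measure.restrict_univ, Set.indicator_univ,
      Pi.one_apply, one_mul] at h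
    rw [h]
    have : ∀ ω : Ω, ENNReal.ofReal (Real.exp (s 0 ω))
        * ∏ k ∈ Finset.Icc 1 0, dk k ω = ENNReal.ofReal (Real.exp c0) := by
      intro ω
      simp [hc0 ω]
    rw [lintegral_congr this, lintegral_const, measure_univ, mul_one]
  haveI hQprob' : IsProbabilityMeasure Q := hQprob
  have hSint : ∀ r : ℕ, r ≤ T → Integrable (S r) Q := by
    intro r hr
    constructor
    · exact ((hSmeas r hr).stronglyMeasurable).aestronglyMeasurable
    · rw [hasFiniteIntegral_iff_ofReal (ae_of_all _ (fun ω => by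
        rw [hS]
        exact Real.exp_nonneg _))]
      rw [hlint r hr]
      exact ENNReal.ofReal_lt_top
  have hcond : ∀ i j : ℕ, i ≤ j → j ≤ T → Q[S j | F i] =ᵐ[Q] S i := by
    intro i j hij hjT
    have hiT : i ≤ T := by omega
    haveI : SigmaFinite (Q.trim (hFle i)) := by
      haveI : IsFiniteMeasure (Q.trim (hFle i)) := isFiniteMeasure_trim _
      infer_instance
    refine (ae_eq_condExp_of_forall_setIntegral_eq (hFle i) (hSint j hjT)
      (fun t ht hft => (hSint i hiT).integrableOn)
      (fun t ht hft => ?_) ?_).symm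
    · -- set integral equality
      have ht' : MeasurableSet[MeasurableSpace.comap (Yt i) MeasurableSpace.pi] t := by
        rw [← hFcomap i]
        exact ht
      obtain ⟨B, hBm, hBeq⟩ := MeasurableSpace.measurableSet_comap.mp ht'
      have hnn : ∀ r : ℕ, (0 : Ω → ℝ) ≤ᵐ[Q.restrict t] S r :=
        fun r => ae_of_all _ fun ω => by
          rw [hS]
          exact Real.exp_nonneg _
      rw [integral_eq_lintegral_of_nonneg_ae (hnn i)
          ((hSmeas i hiT).aestronglyMeasurable.restrict),
        integral_eq_lintegral_of_nonneg_ae (hnn j)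
          ((hSmeas j hjT).aestronglyMeasurable.restrict)]
      congr 1
      rw [← hBeq, hkey i i le_rfl hiT B hBm, hkey i j hij hjT B hBm]
    · -- strong measurability wrt F i
      apply StronglyMeasurable.aestronglyMeasurable
      apply Measurable.stronglyMeasurable
      have hrw : S i = fun ω => Real.exp (sf i (Yt i ω)) :=
        funext fun ω => by rw [hS, hsfY i i le_rfl hiT ω]
      rw [hrw]
      have hYiFi : Measurable[F i] (Yt i) := by
        rw [hFcomap i]
        exact measurable_iff_comap_le.mpr le_rfl
      exact Real.measurable_exp.comp ((hsfm i).comp hYiFi)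
  exact ⟨⟨hiid, hmap⟩, hpartb, ⟨fun n hn => hSint n hn, hcond⟩⟩
end
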